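/- arXiv:1907.06325 — 4 statements merged into one kernel-verified Lean document; each statement's English description precedes it below -/
import Mathlib

section
/- Let X be a transitive subshift with a recurrent transitive point x. Suppose a^∞ ∈ X for a letter a, X ≠ {a^∞}, and every word in X of the form a s or s a with s ≠ a has s = b for a fixed marker symbol b. Then for every n ∈ ℕ, the word a^n is both right-special and left-special in X. -/
open Filter Topology MeasureTheory

variable {A : Type*} {B : Type*}

/-- The shift by `m` on bi-infinite sequences. -/
def shiftBy (m : ℤ) (x : ℤ → A) : ℤ → A := fun i => x (i + m)

/-- The orbit closure of a point. -/
def orbitClosure [TopologicalSpace A] (x : ℤ → A) : Set (ℤ → A) :=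
  closure {y | ∃ m : ℤ, y = shiftBy m x}

/-- A set of sequences invariant under all shifts. -/
def ShiftInvariant (X : Set (ℤ → A)) : Prop := ∀ m : ℤ, ∀ y ∈ X, shiftBy m y ∈ X

/-- A subshift: closed and shift-invariant. -/
def IsSubshift [TopologicalSpace A] (X : Set (ℤ → A)) : Prop :=
  IsClosed X ∧ ShiftInvariant X

/-- The word `w` occurs in `x` at position `i`. -/
def occursAt (x : ℤ → A) (w : List A) (i : ℤ) : Prop :=
  ∀ k : Fin w.length, x (i + (k.val : ℤ)) = w.get k

/-- The word `w` occurs somewhere in some point of `X`. -/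
def WordIn (X : Set (ℤ → A)) (w : List A) : Prop :=
  ∃ x ∈ X, ∃ i : ℤ, occursAt x w i

/-- The language of `X` in length `n`. -/
def langOf (X : Set (ℤ → A)) (n : ℕ) : Set (List A) :=
  {w | w.length = n ∧ WordIn X w}

/-- The complexity function of `X`. -/
noncomputable def complexity (X : Set (ℤ → A)) (n : ℕ) : ℕ := (langOf X n).ncard

/-- `w` is right-special in `X`. -/
def RightSpecial (X : Set (ℤ → A)) (w : List A) : Prop :=
  ∃ a b : A, a ≠ b ∧ WordIn X (w ++ [a]) ∧ WordIn X (w ++ [b])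

/-- `w` is left-special in `X`. -/
def LeftSpecial (X : Set (ℤ → A)) (w : List A) : Prop :=
  ∃ a b : A, a ≠ b ∧ WordIn X (a :: w) ∧ WordIn X (b :: w)

/-- The set of right-special words of length `n`. -/
def RS (X : Set (ℤ → A)) (n : ℕ) : Set (List A) :=
  {w | w.length = n ∧ RightSpecial X w}

/-- The length-`ℓ` word of `x` starting at position `i`. -/
def wordAt (x : ℤ → A) (i : ℤ) (ℓ : ℕ) : List A :=
  List.ofFn (fun t : Fin ℓ => x (i + (t.val : ℤ)))

/-- `x` is a recurrent point: every word in it occurs infinitely often. -/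
def RecurrentPt (x : ℤ → A) : Prop :=
  ∀ n : ℕ, ∀ i N : ℤ, ∃ j : ℤ, N ≤ j ∧ ∀ k : ℕ, k < n → x (j + k) = x (i + k)

/-- `x` is eventually periodic to the right. -/
def EventuallyPeriodicRight (x : ℤ → A) : Prop :=
  ∃ p : ℤ, 0 < p ∧ ∃ N : ℤ, ∀ i : ℤ, N < i → x (i + p) = x i

/-- `x` is eventually periodic to the left. -/
def EventuallyPeriodicLeft (x : ℤ → A) : Prop :=
  ∃ p : ℤ, 0 < p ∧ ∃ N : ℤ, ∀ i : ℤ, i < N → x (i - p) = x i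

/-- `M` is a minimal subsystem of `X`. -/
def MinimalSubsystem [TopologicalSpace A] (X M : Set (ℤ → A)) : Prop :=
  M ⊆ X ∧ M.Nonempty ∧ IsClosed M ∧ ShiftInvariant M ∧
    ∀ M' ⊆ M, M'.Nonempty → IsClosed M' → ShiftInvariant M' → M' = M

/-- `x` is a generic point for the measure `μ`. -/
def GenericFor [TopologicalSpace A] [MeasurableSpace A] (x : ℤ → A)
    (μ : Measure (ℤ → A)) : Prop :=
  ∀ f : (ℤ → A) → ℝ, Continuous f →
    Tendsto (fun N : ℕ => (∑ i ∈ Finset.range N, f (shiftBy i x)) / (N : ℝ)) atTop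
      (𝓝 (∫ y, f y ∂μ))

/-- `μ` is a generic measure for `X`. -/
def GenericMeasure [TopologicalSpace A] [MeasurableSpace A] (X : Set (ℤ → A))
    (μ : Measure (ℤ → A)) : Prop :=
  ∃ x ∈ X, GenericFor x μ

theorem const_mem_orbitClosure_aux [TopologicalSpace A] [DiscreteTopology A]
    (x : ℤ → A) (a : A) (n : ℕ)
    (ha : (fun _ : ℤ => a) ∈ orbitClosure x) :
    ∃ m : ℤ, ∀ k : ℕ, k < n → x (m + (k : ℤ)) = a := by
  have hU : IsOpen {y : ℤ → A | ∀ k : ℕ, k < n → y (k : ℤ) = a} := by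
    have heq : {y : ℤ → A | ∀ k : ℕ, k < n → y (k : ℤ) = a} =
        ⋂ k ∈ Finset.range n, {y : ℤ → A | y (k : ℤ) = a} := by
      ext y; simp [Finset.mem_range]
    rw [heq]
    refine isOpen_biInter_finset (fun k _ => ?_)
    have : IsOpen ((fun y : ℤ → A => y (k : ℤ)) ⁻¹' ({a} : Set A)) :=
      (continuous_apply (k : ℤ)).isOpen_preimage _ (isOpen_discrete _)
    simpa [Set.preimage] using this
  have hmem : (fun _ : ℤ => a) ∈ {y : ℤ → A | ∀ k : ℕ, k < n → y (k : ℤ) = a} :=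
    fun k _ => rfl
  obtain ⟨y, hy1, m, rfl⟩ := mem_closure_iff.mp ha _ hU hmem
  exact ⟨m, fun k hk => by simpa [shiftBy, add_comm] using hy1 k hk⟩

theorem stmt3 [Fintype A] [TopologicalSpace A] [DiscreteTopology A]
    (x : ℤ → A) (X : Set (ℤ → A)) (hX : X = orbitClosure x) (hrec : RecurrentPt x)
    (a b : A) (ha : (fun _ : ℤ => a) ∈ X) (hne : X ≠ {fun _ : ℤ => a})
    (hmarker : ∀ s : A, s ≠ a →
      (WordIn X [a, s] → s = b) ∧ (WordIn X [s, a] → s = b)) :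
    ∀ n : ℕ, 1 ≤ n →
      RightSpecial X (List.replicate n a) ∧ LeftSpecial X (List.replicate n a) := by
  intro n hn
  have hxX : x ∈ X := by
    rw [hX]
    exact subset_closure ⟨0, by funext i; simp [shiftBy]⟩
  -- x is not identically a
  have hsingle : x ≠ (fun _ : ℤ => a) := by
    intro hxa
    apply hne
    rw [hX, hxa, orbitClosure]
    have hset : {y : ℤ → A | ∃ m : ℤ, y = shiftBy m (fun _ : ℤ => a)} =
        {fun _ : ℤ => a} := by
      ext y
      constructor
      · rintro ⟨m, rfl⟩; rfl
      · rintro rfl; exact ⟨0, rfl⟩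
    rw [hset]
    exact closure_singleton
  -- an occurrence of a^n in x
  obtain ⟨m, hm⟩ := const_mem_orbitClosure_aux x a n (hX ▸ ha)
  -- any word with all letters a is in the language
  have hWa : ∀ w : List A, (∀ c ∈ w, c = a) → WordIn X w := by
    intro w hw
    exact ⟨_, ha, 0, fun k => (hw _ (w.get_mem k)).symm⟩
  constructor
  · -- Right special
    by_contra hcon
    have hno : ∀ s : A, s ≠ a → ¬ WordIn X (List.replicate n a ++ [s]) := by
      intro s hs hW
      exact hcon ⟨a, s, Ne.symm hs, hWa _ (by
        intro c hc
        rcases List.mem_append.mp hc with h | h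
        · exact List.eq_of_mem_replicate h
        · simpa using h), hW⟩
    -- forcing step
    have hforce : ∀ j : ℤ, (∀ k : ℕ, k < n → x (j + (k : ℤ)) = a) → x (j + (n : ℤ)) = a := by
      intro j hj
      by_contra hxs
      apply hno (x (j + (n : ℤ))) hxs
      refine ⟨x, hxX, j, ?_⟩
      rintro ⟨kv, hkv⟩
      have hk2 : kv < n + 1 := by simpa using hkv
      simp only [List.get_eq_getElem]
      rcases lt_or_eq_of_le (Nat.lt_succ_iff.mp hk2) with h1 | h1
      · rw [List.getElem_append_left (by simpa using h1), List.getElem_replicate]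
        exact hj kv h1
      · subst h1
        rw [List.getElem_append_right (by simp)]
        simp
    -- forward induction: run stays all a
    have hrun : ∀ d : ℕ, ∀ k : ℕ, k < n → x (m + (d : ℤ) + (k : ℤ)) = a := by
      intro d
      induction d with
      | zero => simpa using hm
      | succ d ih =>
        intro k hk
        rcases lt_or_eq_of_le (Nat.succ_le_of_lt hk) with h1 | h1
        · have := ih (k + 1) h1
          rw [show m + (((d + 1 : ℕ)) : ℤ) + (k : ℤ) = m + (d : ℤ) + (((k + 1 : ℕ)) : ℤ) by
            push_cast; ring]
          exact this
        · have := hforce (m + (d : ℤ)) ih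
          rw [show m + (((d : ℕ) + 1 : ℕ) : ℤ) + (k : ℤ) = m + (d : ℤ) + (n : ℤ) by
            push_cast; omega]
          exact this
    -- every position ≥ m is a; then by recurrence x ≡ a
    have hall : ∀ t : ℤ, x t = a := by
      intro t
      obtain ⟨j, hj1, hj2⟩ := hrec 1 t m
      have hxj : x j = x t := by simpa using hj2 0 (by norm_num)
      have : x (m + ((j - m).toNat : ℤ) + (0 : ℕ)) = a :=
        hrun (j - m).toNat 0 hn
      rw [Int.toNat_of_nonneg (by omega)] at this
      simpa [hxj] using (by simpa [show m + (j - m) = j by ring] using this : x j = a)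
    exact hsingle (funext hall)
  · -- Left special
    by_contra hcon
    have hno : ∀ s : A, s ≠ a → ¬ WordIn X (s :: List.replicate n a) := by
      intro s hs hW
      exact hcon ⟨a, s, Ne.symm hs, hWa _ (by
        intro c hc
        rcases List.mem_cons.mp hc with h | h
        · exact h
        · exact List.eq_of_mem_replicate h), hW⟩
    -- forcing step (backwards)
    have hforce : ∀ j : ℤ, (∀ k : ℕ, k < n → x (j + (k : ℤ)) = a) → x (j - 1) = a := by
      intro j hj
      by_contra hxs
      apply hno (x (j - 1)) hxs
      refine ⟨x, hxX, j - 1, ?_⟩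
      rintro ⟨kv, hkv⟩
      have hk2 : kv < n + 1 := by simpa using hkv
      simp only [List.get_eq_getElem]
      rcases Nat.eq_zero_or_pos kv with h1 | h1
      · subst h1; simp
      · obtain ⟨c, rfl⟩ : ∃ c, kv = c + 1 := ⟨kv - 1, by omega⟩
        have hlt : c < n := by omega
        rw [show ((x (j - 1) :: List.replicate n a)[c + 1]'hkv) = a by
          simp [List.getElem_replicate]]
        have := hj c hlt
        rw [show j - 1 + (((c + 1 : ℕ)) : ℤ) = j + ((c : ℕ) : ℤ) by push_cast; ring]
        exact this
    -- backward induction from an occurrence at j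
    have hrun : ∀ j : ℤ, (∀ k : ℕ, k < n → x (j + (k : ℤ)) = a) →
        ∀ d : ℕ, ∀ k : ℕ, k < n → x (j - (d : ℤ) + (k : ℤ)) = a := by
      intro j hj d
      induction d with
      | zero => simpa using hj
      | succ d ih =>
        intro k hk
        rcases Nat.eq_zero_or_pos k with h1 | h1
        · have := hforce (j - (d : ℤ)) ih
          rw [show j - (((d : ℕ) + 1 : ℕ) : ℤ) + (k : ℤ) = j - (d : ℤ) - 1 by
            push_cast; omega]
          exact this
        · have hlt : k - 1 < n := by omega
          have := ih (k - 1) hlt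
          rw [show j - (((d : ℕ) + 1 : ℕ) : ℤ) + (k : ℤ) = j - (d : ℤ) + ((k - 1 : ℕ) : ℤ) by
            push_cast; omega]
          exact this
    have hall : ∀ t : ℤ, x t = a := by
      intro t
      obtain ⟨j, hj1, hj2⟩ := hrec n m t
      have hocc : ∀ k : ℕ, k < n → x (j + (k : ℤ)) = a := by
        intro k hk
        rw [hj2 k hk]
        exact hm k hk
      have := hrun j hocc (j - t).toNat 0 hn
      rw [Int.toNat_of_nonneg (by omega)] at this
      simpa [show j - (j - t) + (0 : ℤ) = t by ring] using this
    exact hsingle (funext hall)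
end

section
/- Let X be a transitive subshift which is the orbit closure of a recurrent point, and suppose X has j ≥ 2 proper minimal subsystems, exactly i of which are infinite (0 ≤ i ≤ j). Then liminf_{n→∞} (c_X(n) − (j+i)n) = ∞. -/
open Filter Topology MeasureTheory

variable {A : Type*} {B : Type*}

section Basics

@[simp] lemma length_wordAt (x : ℤ → A) (i : ℤ) (ℓ : ℕ) : (wordAt x i ℓ).length = ℓ := by
  simp [wordAt]

lemma occursAt_wordAt (x : ℤ → A) (i : ℤ) (ℓ : ℕ) : occursAt x (wordAt x i ℓ) i := by
  intro k
  have hk : k.val < ℓ := by simpa [wordAt] using k.isLt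
  rw [List.get_eq_getElem]
  simp [wordAt]

lemma wordIn_wordAt {Y : Set (ℤ → A)} {y : ℤ → A} (hy : y ∈ Y) (i : ℤ) (ℓ : ℕ) :
    WordIn Y (wordAt y i ℓ) := ⟨y, hy, i, occursAt_wordAt y i ℓ⟩

lemma wordAt_mem_langOf {Y : Set (ℤ → A)} {y : ℤ → A} (hy : y ∈ Y) (i : ℤ) (ℓ : ℕ) :
    wordAt y i ℓ ∈ langOf Y ℓ := ⟨length_wordAt y i ℓ, wordIn_wordAt hy i ℓ⟩

lemma occursAt.wordAt_eq {y : ℤ → A} {w : List A} {i : ℤ} (h : occursAt y w i) :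
    wordAt y i w.length = w := by
  apply List.ext_get (by simp)
  intro k h1 h2
  have h1' : k < w.length := by simpa using h1
  have := h ⟨k, h1'⟩
  simpa [wordAt, List.get_ofFn] using this

/-- elementwise characterization -/
lemma occursAt_iff_forall {y : ℤ → A} {w : List A} {i : ℤ} :
    occursAt y w i ↔ ∀ k : ℕ, (hk : k < w.length) → y (i + k) = w[k] := by
  constructor
  · intro h k hk; exact h ⟨k, hk⟩
  · intro h k; exact h k.val k.isLt

lemma occursAt_iff_wordAt {y : ℤ → A} {w : List A} {i : ℤ} :
    occursAt y w i ↔ wordAt y i w.length = w := by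
  constructor
  · exact occursAt.wordAt_eq
  · intro h
    have := occursAt_wordAt y i w.length
    rwa [h] at this

lemma wordIn_mono {X Y : Set (ℤ → A)} (h : X ⊆ Y) {w : List A} (hw : WordIn X w) :
    WordIn Y w := by
  obtain ⟨z, hz, i, hi⟩ := hw
  exact ⟨z, h hz, i, hi⟩

lemma occursAt_append {y : ℤ → A} {u v : List A} {i : ℤ} :
    occursAt y (u ++ v) i ↔ occursAt y u i ∧ occursAt y v (i + u.length) := by
  simp only [occursAt_iff_forall]
  constructor
  · intro h
    constructor
    · intro k hk
      have hk' : k < (u ++ v).length := by simp; omega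
      have := h k hk'
      rwa [List.getElem_append_left hk] at this
    · intro k hk
      have hk' : u.length + k < (u ++ v).length := by simp; omega
      have := h (u.length + k) hk'
      have h2 : (u ++ v)[u.length + k]'hk' = v[k]'hk := by
        rw [List.getElem_append_right (by omega)]
        congr 1; omega
      rw [h2] at this
      rw [← this]
      push_cast
      ring_nf
  · rintro ⟨h1, h2⟩ k hk
    rcases lt_or_ge k u.length with hku | hku
    · have := h1 k hku
      rwa [List.getElem_append_left hku]
    · have hmv : k - u.length < v.length := by simp at hk; omega
      have := h2 (k - u.length) hmv
      rw [List.getElem_append_right hku]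
      rw [← this]
      congr 1
      omega
  
lemma wordIn_of_append_left {Y : Set (ℤ → A)} {u v : List A} (h : WordIn Y (u ++ v)) :
    WordIn Y u := by
  obtain ⟨z, hz, i, hi⟩ := h
  exact ⟨z, hz, i, (occursAt_append.1 hi).1⟩

lemma wordIn_of_append_right {Y : Set (ℤ → A)} {u v : List A} (h : WordIn Y (u ++ v)) :
    WordIn Y v := by
  obtain ⟨z, hz, i, hi⟩ := h
  exact ⟨z, hz, i + u.length, (occursAt_append.1 hi).2⟩

lemma wordIn_of_cons {Y : Set (ℤ → A)} {a : A} {w : List A} (h : WordIn Y (a :: w)) :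
    WordIn Y w := wordIn_of_append_right (u := [a]) (by simpa using h)

/-- every word in a language extends on the right -/
lemma wordIn_extend {Y : Set (ℤ → A)} {w : List A} (h : WordIn Y w) :
    ∃ a : A, WordIn Y (w ++ [a]) := by
  obtain ⟨z, hz, i, hi⟩ := h
  refine ⟨z (i + w.length), z, hz, i, ?_⟩
  rw [occursAt_append]
  refine ⟨hi, ?_⟩
  rw [occursAt_iff_forall]
  intro k hk
  have : k = 0 := by simpa using hk
  simp [this]

lemma wordAt_append (x : ℤ → A) (i : ℤ) (a b : ℕ) :
    wordAt x i (a + b) = wordAt x i a ++ wordAt x (i + a) b := by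
  have h := occursAt_wordAt x i (a + b)
  have h1 : occursAt x (wordAt x i a ++ wordAt x (i+a) b) i := by
    rw [occursAt_append]
    exact ⟨occursAt_wordAt x i a, by simpa using occursAt_wordAt x (i + a) b⟩
  have := h1.wordAt_eq
  simp only [List.length_append, length_wordAt] at this
  rw [← this]

@[simp] lemma shiftBy_zero (x : ℤ → A) : shiftBy 0 x = x := by
  funext i; simp [shiftBy]

lemma shiftBy_shiftBy (m k : ℤ) (x : ℤ → A) : shiftBy m (shiftBy k x) = shiftBy (m + k) x := by
  funext i; simp [shiftBy]; ring_nf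

lemma occursAt_shiftBy {y : ℤ → A} {w : List A} {m i : ℤ} :
    occursAt (shiftBy m y) w i ↔ occursAt y w (i + m) := by
  constructor <;> intro h k <;> have := h k <;>
    simpa [shiftBy, add_right_comm] using this

lemma continuous_shiftBy [TopologicalSpace A] (m : ℤ) :
    Continuous (shiftBy (A := A) m) := by
  apply continuous_pi
  intro i
  exact continuous_apply (i + m)

end Basics

-- appended to basics
section Topo

variable [Fintype A] [TopologicalSpace A] [DiscreteTopology A]

/-- agreement on a finite window is an open neighborhood criterion for closure membership -/
lemma mem_closure_iff_agree {S : Set (ℤ → A)} {y : ℤ → A} :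
    y ∈ closure S ↔ ∀ F : Finset ℤ, ∃ z ∈ S, ∀ t ∈ F, z t = y t := by
  constructor
  · intro h F
    have hU : IsOpen {z : ℤ → A | ∀ t ∈ F, z t = y t} := by
      have : {z : ℤ → A | ∀ t ∈ F, z t = y t} = ⋂ t ∈ F, (fun z : ℤ → A => z t) ⁻¹' {y t} := by
        ext z; simp
      rw [this]
      exact isOpen_biInter_finset fun t _ => (continuous_apply t).isOpen_preimage _ (isOpen_discrete _)
    have hy : y ∈ {z : ℤ → A | ∀ t ∈ F, z t = y t} := fun t _ => rfl
    obtain ⟨z, hz1, hz2⟩ := mem_closure_iff.1 h _ hU hy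
    exact ⟨z, hz2, hz1⟩
  · intro h
    rw [mem_closure_iff]
    intro U hU hyU
    obtain ⟨I, u, hIu, hsub⟩ := isOpen_pi_iff.1 hU y hyU
    obtain ⟨z, hzS, hz⟩ := h I
    refine ⟨z, ?_, hzS⟩
    apply hsub
    intro t ht
    rw [hz t ht]
    exact (hIu t ht).2

/-- if every central word of y is in the language of a closed shift-invariant set M, then y ∈ M -/
lemma mem_of_words {M : Set (ℤ → A)} (hMc : IsClosed M) (hMi : ShiftInvariant M)
    {y : ℤ → A} (h : ∀ n : ℕ, WordIn M (wordAt y (-(n : ℤ)) (2 * n + 1))) : y ∈ M := by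
  rw [← hMc.closure_eq, mem_closure_iff_agree]
  intro F
  set n : ℕ := F.sup (fun t => t.natAbs) with hn
  obtain ⟨z₀, hz₀, i, hocc⟩ := h n
  refine ⟨shiftBy (i + n) z₀, hMi _ _ hz₀, ?_⟩
  intro t ht
  have hta : t.natAbs ≤ n := Finset.le_sup (f := fun t : ℤ => t.natAbs) ht
  have h1 : -(n : ℤ) ≤ t ∧ t ≤ n := by omega
  have hk : (t + n).toNat < 2 * n + 1 := by omega
  have := occursAt_iff_forall.1 hocc (t + n).toNat (by simpa using hk)
  have hw : (wordAt y (-(n:ℤ)) (2*n+1))[(t + n).toNat]'(by simpa using hk) = y t := by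
    simp only [wordAt, List.getElem_ofFn]
    congr 1
    omega
  rw [hw] at this
  rw [← this]
  simp only [shiftBy]
  congr 1
  omega

/-- factor-closedness via prefix-of-suffix: language membership of subwords of window words -/
lemma wordIn_of_wordAt_sub {Y : Set (ℤ → A)} {y : ℤ → A} {i : ℤ} {ℓ : ℕ}
    (h : WordIn Y (wordAt y i ℓ)) {i' : ℤ} {ℓ' : ℕ} (hi : i ≤ i') (hl : i' + ℓ' ≤ i + ℓ) :
    WordIn Y (wordAt y i' ℓ') := by
  obtain ⟨a, ha⟩ : ∃ a : ℕ, i' = i + a := ⟨(i' - i).toNat, by omega⟩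
  obtain ⟨b, hb⟩ : ∃ b : ℕ, ℓ = a + ℓ' + b := ⟨ℓ - a - ℓ', by omega⟩
  subst ha hb
  rw [show a + ℓ' + b = a + (ℓ' + b) from by ring, wordAt_append, wordAt_append] at h
  exact wordIn_of_append_left (wordIn_of_append_right h)

/-- if every length at/beyond any bound of the language of Y is inside language of M,
then Y ⊆ M (M closed shift-invariant) -/
lemma subset_of_lang_subset {M Y : Set (ℤ → A)} (hMc : IsClosed M) (hMi : ShiftInvariant M)
    (h : ∀ n : ℕ, ∃ m : ℕ, n ≤ m ∧ ∀ w : List A, w.length = m → WordIn Y w → WordIn M w) :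
    Y ⊆ M := by
  intro y hy
  apply mem_of_words hMc hMi
  intro n
  obtain ⟨m, hm, hsub⟩ := h (2 * n + 1)
  have hwm : WordIn M (wordAt y (-(n:ℤ)) m) :=
    hsub _ (length_wordAt _ _ _) (wordIn_wordAt hy _ _)
  exact wordIn_of_wordAt_sub hwm le_rfl (by omega)

/-- two disjoint closed shift-invariant nonempty-or-not sets have eventually disjoint languages -/
lemma lang_disjoint {M M' : Set (ℤ → A)} (hMc : IsClosed M) (hMi : ShiftInvariant M)
    (hM'c : IsClosed M') (hM'i : ShiftInvariant M') (hdisj : M ∩ M' = ∅) :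
    ∃ N : ℕ, ∀ n : ℕ, N ≤ n → ∀ w : List A, w.length = n → WordIn M w → ¬ WordIn M' w := by
  by_contra hcon
  push_neg at hcon
  -- for every N there are arbitrarily long common words; by factor-closedness all lengths
  have hall : ∀ n : ℕ, ∃ w : List A, w.length = n ∧ WordIn M w ∧ WordIn M' w := by
    intro n
    obtain ⟨m, hm, w, hlen, h1, h2⟩ := hcon n
    obtain ⟨z, hz, i, hocc⟩ := h1
    have hw : w = wordAt z i m := by rw [← hocc.wordAt_eq, hlen]
    have h1 : WordIn M (wordAt z i m) := wordIn_wordAt hz i m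
    rw [hw] at h2
    refine ⟨wordAt z i n, length_wordAt _ _ _, ?_, ?_⟩
    · exact wordIn_of_wordAt_sub h1 le_rfl (by push_cast; omega)
    · exact wordIn_of_wordAt_sub h2 le_rfl (by push_cast; omega)
  -- construct a point in both via compactness
  set V : ℕ → Set (ℤ → A) :=
    fun n => {y ∈ M | WordIn M' (wordAt y (-(n:ℤ)) (2 * n + 1))} with hV
  have hVnonempty : ∀ n, (V n).Nonempty := by
    intro n
    obtain ⟨w, hlen, h1, h2⟩ := hall (2 * n + 1)
    obtain ⟨z, hz, i, hocc⟩ := h1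
    refine ⟨shiftBy (i + n) z, hMi _ _ hz, ?_⟩
    have hw : wordAt (shiftBy (i + n) z) (-(n:ℤ)) (2 * n + 1) = w := by
      rw [← hocc.wordAt_eq, hlen]
      simp only [wordAt, shiftBy]
      congr 1
      funext t
      congr 1
      omega
    rw [hw]
    exact h2
  have key : ∀ n : ℕ, IsClosed {y : ℤ → A | WordIn M' (wordAt y (-(n:ℤ)) (2 * n + 1))} := by
    intro n
    have : {y : ℤ → A | WordIn M' (wordAt y (-(n:ℤ)) (2 * n + 1))} =
        (fun (y : ℤ → A) (t : Fin (2*n+1)) => y (-(n:ℤ) + t)) ⁻¹'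
          {f | WordIn M' (List.ofFn f)} := rfl
    rw [this]
    apply IsClosed.preimage
    · exact continuous_pi fun t => continuous_apply _
    · exact isClosed_discrete _
  have hVclosed : ∀ n, IsClosed (V n) := fun n => hMc.inter (key n)
  have hVmono : ∀ n, V (n+1) ⊆ V n := by
    rintro n y ⟨hyM, hyw⟩
    refine ⟨hyM, ?_⟩
    exact wordIn_of_wordAt_sub hyw (by push_cast; omega) (by push_cast; omega)
  have hcompact : IsCompact (V 0) := (hVclosed 0).isCompact
  obtain ⟨y, hy⟩ := IsCompact.nonempty_iInter_of_sequence_nonempty_isCompact_isClosed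
    V hVmono hVnonempty hcompact hVclosed
  simp only [Set.mem_iInter] at hy
  have hyM : y ∈ M := (hy 0).1
  have hyM' : y ∈ M' := mem_of_words hM'c hM'i (fun n => (hy n).2)
  have : y ∈ M ∩ M' := ⟨hyM, hyM'⟩
  rw [hdisj] at this
  exact this

end Topo

section Orbit

variable [Fintype A] [TopologicalSpace A] [DiscreteTopology A]

lemma mem_orbitClosure_self (x : ℤ → A) : x ∈ orbitClosure x :=
  subset_closure ⟨0, (shiftBy_zero x).symm⟩

lemma isClosed_orbitClosure (x : ℤ → A) : IsClosed (orbitClosure x) := isClosed_closure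

lemma shiftInvariant_orbitClosure (x : ℤ → A) : ShiftInvariant (orbitClosure x) := by
  intro m y hy
  have hcont := continuous_shiftBy (A := A) m
  have : shiftBy m y ∈ closure (shiftBy m '' {y | ∃ k : ℤ, y = shiftBy k x}) :=
    (image_closure_subset_closure_image hcont) ⟨y, hy, rfl⟩
  apply closure_mono ?_ this
  rintro z ⟨u, ⟨k, rfl⟩, rfl⟩
  exact ⟨m + k, shiftBy_shiftBy m k x⟩

/-- every word of the orbit closure occurs in x itself -/
lemma wordIn_orbitClosure_iff {x : ℤ → A} {w : List A} :
    WordIn (orbitClosure x) w ↔ ∃ i : ℤ, occursAt x w i := by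
  constructor
  · rintro ⟨y, hy, i, hocc⟩
    have hy' : y ∈ closure {y : ℤ → A | ∃ m : ℤ, y = shiftBy m x} := hy
    rw [mem_closure_iff_agree] at hy'
    obtain ⟨z, ⟨m, rfl⟩, hagree⟩ := hy' (Finset.image (fun k : ℕ => i + k) (Finset.range w.length))
    refine ⟨i + m, ?_⟩
    rw [occursAt_iff_forall]
    intro k hk
    have := occursAt_iff_forall.1 hocc k hk
    have ha := hagree (i + k) (Finset.mem_image.2 ⟨k, Finset.mem_range.2 hk, rfl⟩)
    simp only [shiftBy] at ha
    rw [show i + m + (k:ℤ) = i + k + m from by ring, ha, this]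
  · rintro ⟨i, hocc⟩
    exact ⟨x, mem_orbitClosure_self x, i, hocc⟩

/-- recurrence: every word of x occurs at arbitrarily large positions -/
lemma recurrent_occurs {x : ℤ → A} (hrec : RecurrentPt x) (i N : ℤ) (n : ℕ) :
    ∃ q : ℤ, N ≤ q ∧ wordAt x q n = wordAt x i n := by
  obtain ⟨q, hq, hagree⟩ := hrec n i N
  refine ⟨q, hq, ?_⟩
  simp only [wordAt]
  congr 1
  funext t
  exact hagree t t.isLt

end Orbit

section Count

open Classical

variable [Fintype A]

lemma langOf_finite (Y : Set (ℤ → A)) (n : ℕ) : (langOf Y n).Finite := by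
  apply Set.Finite.subset (Set.finite_range (fun f : Fin n → A => List.ofFn f))
  rintro w ⟨hlen, -⟩
  exact ⟨fun k => w.get (Fin.cast hlen.symm k), by
    apply List.ext_get (by simp [hlen])
    intro k h1 h2
    simp⟩

/-- number of right-extensions of w in the language of Y -/
noncomputable def extCount (Y : Set (ℤ → A)) (w : List A) : ℕ :=
  (Finset.univ.filter (fun a : A => WordIn Y (w ++ [a]))).card

lemma one_le_extCount {Y : Set (ℤ → A)} {w : List A} (h : WordIn Y w) :
    1 ≤ extCount Y w := by
  obtain ⟨a, ha⟩ := wordIn_extend h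
  rw [extCount]
  exact Finset.card_pos.2 ⟨a, Finset.mem_filter.2 ⟨Finset.mem_univ a, ha⟩⟩

lemma two_le_extCount {Y : Set (ℤ → A)} {w : List A} (h : RightSpecial Y w) :
    2 ≤ extCount Y w := by
  obtain ⟨a, b, hab, ha, hb⟩ := h
  rw [extCount]
  have : ({a, b} : Finset A) ⊆ Finset.univ.filter (fun c : A => WordIn Y (w ++ [c])) := by
    intro c hc
    simp only [Finset.mem_insert, Finset.mem_singleton] at hc
    rcases hc with rfl | rfl <;> simp [ha, hb]
  calc 2 = ({a, b} : Finset A).card := (Finset.card_pair hab).symm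
    _ ≤ _ := Finset.card_le_card this

lemma extCount_le_one {Y : Set (ℤ → A)} {w : List A} (h : ¬ RightSpecial Y w) :
    extCount Y w ≤ 1 := by
  rw [extCount]
  apply Finset.card_le_one.2
  intro a ha b hb
  by_contra hab
  exact h ⟨a, b, hab, (Finset.mem_filter.1 ha).2, (Finset.mem_filter.1 hb).2⟩

lemma complexity_succ_eq (Y : Set (ℤ → A)) (n : ℕ) :
    complexity Y (n + 1) = ∑ w ∈ (langOf_finite Y n).toFinset, extCount Y w := by
  classical
  have hmap : ∀ u ∈ (langOf_finite Y (n+1)).toFinset, u.dropLast ∈ (langOf_finite Y n).toFinset := by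
    intro u hu
    rw [Set.Finite.mem_toFinset] at hu ⊢
    obtain ⟨hlen, hin⟩ := hu
    have hne : u ≠ [] := by intro h; rw [h] at hlen; simp at hlen
    have hu' : u.dropLast ++ [u.getLast hne] = u := List.dropLast_append_getLast hne
    refine ⟨by simp [hlen], ?_⟩
    rw [← hu'] at hin
    exact wordIn_of_append_left hin
  have := Finset.card_eq_sum_card_fiberwise hmap
  have hc : complexity Y (n+1) = (langOf_finite Y (n+1)).toFinset.card := by
    rw [complexity, Set.ncard_eq_toFinset_card _ (langOf_finite Y (n+1))]
  rw [hc, this]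
  apply Finset.sum_congr rfl
  intro w hw
  rw [Set.Finite.mem_toFinset] at hw
  obtain ⟨hwlen, hwin⟩ := hw
  -- fiber over w is the image of the extension letters
  have hfib : (langOf_finite Y (n+1)).toFinset.filter (fun u => u.dropLast = w) =
      (Finset.univ.filter (fun a : A => WordIn Y (w ++ [a]))).image (fun a => w ++ [a]) := by
    ext u
    simp only [Finset.mem_filter, Finset.mem_image, Set.Finite.mem_toFinset, Finset.mem_univ,
      true_and]
    constructor
    · rintro ⟨⟨hlen, hin⟩, hdrop⟩
      have hne : u ≠ [] := by intro h; rw [h] at hlen; simp at hlen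
      have hu' : u.dropLast ++ [u.getLast hne] = u := List.dropLast_append_getLast hne
      refine ⟨u.getLast hne, ?_, ?_⟩
      · rw [hdrop] at hu'; rw [hu']; exact hin
      · rw [hdrop] at hu'; exact hu'
    · rintro ⟨a, hain, rfl⟩
      refine ⟨⟨by simp [hwlen], hain⟩, by simp⟩
  rw [hfib, Finset.card_image_of_injective _ (fun a b hab => by
    simpa using List.append_cancel_left hab), extCount]

lemma complexity_succ_ge (Y : Set (ℤ → A)) (n : ℕ) (S : Finset (List A))
    (hS : S ⊆ (langOf_finite Y n).toFinset) :
    complexity Y n + ∑ w ∈ S, (extCount Y w - 1) ≤ complexity Y (n + 1) := by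
  classical
  rw [complexity_succ_eq]
  have hc : complexity Y n = (langOf_finite Y n).toFinset.card := by
    rw [complexity, Set.ncard_eq_toFinset_card _ (langOf_finite Y n)]
  rw [hc]
  have h1 : ∀ w ∈ (langOf_finite Y n).toFinset, 1 ≤ extCount Y w := by
    intro w hw
    rw [Set.Finite.mem_toFinset] at hw
    exact one_le_extCount hw.2
  have e1 : (langOf_finite Y n).toFinset.card
      = ((langOf_finite Y n).toFinset \ S).card + S.card :=
    (Finset.card_sdiff_add_card_eq_card hS).symm
  have e2 : ∑ w ∈ (langOf_finite Y n).toFinset, extCount Y w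
      = ∑ w ∈ (langOf_finite Y n).toFinset \ S, extCount Y w + ∑ w ∈ S, extCount Y w :=
    (Finset.sum_sdiff hS).symm
  have e3 : ((langOf_finite Y n).toFinset \ S).card
      ≤ ∑ w ∈ (langOf_finite Y n).toFinset \ S, extCount Y w := by
    have := Finset.card_nsmul_le_sum ((langOf_finite Y n).toFinset \ S) (extCount Y) 1
      (fun w hw => h1 w (Finset.mem_sdiff.1 hw).1)
    simpa using this
  have e4 : ∑ w ∈ S, extCount Y w = ∑ w ∈ S, (extCount Y w - 1) + S.card := by
    have : ∑ w ∈ S, extCount Y w = ∑ w ∈ S, ((extCount Y w - 1) + 1) := by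
      apply Finset.sum_congr rfl
      intro w hw
      have := h1 w (hS hw)
      omega
    rw [this, Finset.sum_add_distrib]
    simp
  omega

lemma complexity_mono_succ (Y : Set (ℤ → A)) (n : ℕ) :
    complexity Y n ≤ complexity Y (n + 1) := by
  have := complexity_succ_ge Y n ∅ (Finset.empty_subset _)
  simpa using this

lemma complexity_succ_le (Y : Set (ℤ → A)) (n : ℕ)
    (h : ∀ w : List A, w.length = n → WordIn Y w → ¬ RightSpecial Y w) :
    complexity Y (n + 1) ≤ complexity Y n := by
  classical
  rw [complexity_succ_eq]
  have hc : complexity Y n = (langOf_finite Y n).toFinset.card := by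
    rw [complexity, Set.ncard_eq_toFinset_card _ (langOf_finite Y n)]
  rw [hc]
  calc ∑ w ∈ (langOf_finite Y n).toFinset, extCount Y w
      ≤ ∑ _w ∈ (langOf_finite Y n).toFinset, 1 := by
        apply Finset.sum_le_sum
        intro w hw
        rw [Set.Finite.mem_toFinset] at hw
        exact extCount_le_one (h w hw.1 hw.2)
    _ = _ := by simp

end Count

section Minimal

variable [Fintype A] [TopologicalSpace A] [DiscreteTopology A]

lemma minimal_disjoint {X M M' : Set (ℤ → A)} (h : MinimalSubsystem X M)
    (h' : MinimalSubsystem X M') (hne : M ≠ M') : M ∩ M' = ∅ := by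
  by_contra hcon
  have hne' : (M ∩ M').Nonempty := Set.nonempty_iff_ne_empty.2 hcon
  obtain ⟨-, -, hMc, hMi, hMmin⟩ := h
  obtain ⟨-, -, hM'c, hM'i, hM'min⟩ := h'
  have hinv : ShiftInvariant (M ∩ M') := fun m y hy => ⟨hMi m y hy.1, hM'i m y hy.2⟩
  have e1 := hMmin (M ∩ M') Set.inter_subset_left hne' (hMc.inter hM'c) hinv
  have e2 := hM'min (M ∩ M') Set.inter_subset_right hne' (hMc.inter hM'c) hinv
  exact hne (e1.symm.trans e2)

lemma langOf_nonempty {Y : Set (ℤ → A)} (hY : Y.Nonempty) (n : ℕ) :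
    ∃ w : List A, w.length = n ∧ WordIn Y w := by
  obtain ⟨y, hy⟩ := hY
  exact ⟨wordAt y 0 n, length_wordAt _ _ _, wordIn_wordAt hy 0 n⟩

/-- suffix of a right-special word is right-special -/
lemma rightSpecial_suffix {Y : Set (ℤ → A)} {u s : List A}
    (h : RightSpecial Y (u ++ s)) : RightSpecial Y s := by
  obtain ⟨a, b, hab, ha, hb⟩ := h
  rw [List.append_assoc] at ha hb
  exact ⟨a, b, hab, wordIn_of_append_right ha, wordIn_of_append_right hb⟩

/-- pointwise consequence of equal windows -/
lemma wordAt_congr' {y z : ℤ → A} {i i' : ℤ} {ℓ : ℕ} (h : wordAt y i ℓ = wordAt z i' ℓ)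
    {k : ℕ} (hk : k < ℓ) : y (i + k) = z (i' + k) := by
  have h' := List.ofFn_inj.1 h
  exact congrFun h' ⟨k, hk⟩

/-- pointwise consequence of equal windows -/
lemma wordAt_congr {y z : ℤ → A} {i : ℤ} {ℓ : ℕ} (h : wordAt y i ℓ = wordAt z i ℓ)
    {k : ℕ} (hk : k < ℓ) : y (i + k) = z (i + k) := wordAt_congr' h hk

/-- an infinite set has right-special words of every length -/
lemma infinite_rightSpecial {Y : Set (ℤ → A)} (hY : Y.Infinite) (n : ℕ) :
    ∃ w : List A, w.length = n ∧ WordIn Y w ∧ RightSpecial Y w := by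
  classical
  by_contra hcon
  push_neg at hcon
  -- no right-special words of any length ≥ n
  have hnoRS : ∀ m : ℕ, n ≤ m → ∀ w : List A, w.length = m → WordIn Y w → ¬ RightSpecial Y w := by
    intro m hm w hw hin hRS
    have hsplit : w = w.take (m - n) ++ w.drop (m - n) := (List.take_append_drop _ w).symm
    have hslen : (w.drop (m - n)).length = n := by simp [hw]; omega
    rw [hsplit] at hRS
    have hsuffRS := rightSpecial_suffix hRS
    have hsuffin : WordIn Y (w.drop (m - n)) := by
      rw [hsplit] at hin
      exact wordIn_of_append_right hin
    exact hcon _ hslen hsuffin hsuffRS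
  -- so complexity is bounded by complexity at n
  have hbound : ∀ m : ℕ, n ≤ m → complexity Y m ≤ complexity Y n := by
    intro m hm
    induction m, hm using Nat.le_induction with
    | base => exact le_rfl
    | succ m hm ih =>
        exact (complexity_succ_le Y m (hnoRS m hm)).trans ih
  -- but infinite Y has unbounded complexity
  obtain ⟨t, htY, htcard⟩ := hY.exists_subset_card_eq (complexity Y n + 1)
  -- separation coordinate for each pair
  set K : (ℤ → A) × (ℤ → A) → ℕ := fun p =>
    if h : p.1 ≠ p.2 then (Function.ne_iff.1 h).choose.natAbs else 0 with hK
  set R : ℕ := max ((t ×ˢ t).sup K) n with hR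
  have hinj : Set.InjOn (fun y : ℤ → A => wordAt y (-(R:ℤ)) (2 * R + 1)) t := by
    intro y hy z hz heq
    by_contra hyz
    have hKle : K (y, z) ≤ R := le_trans (Finset.le_sup (Finset.mk_mem_product hy hz)) (le_max_left _ _)
    have hc : y (Function.ne_iff.1 hyz).choose ≠ z (Function.ne_iff.1 hyz).choose :=
      (Function.ne_iff.1 hyz).choose_spec
    set c := (Function.ne_iff.1 hyz).choose with hcdef
    have hcabs : c.natAbs ≤ R := by
      have : K (y, z) = c.natAbs := by rw [hK]; simp only [hyz, dif_pos, ne_eq]; rfl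
      omega
    have hidx : (c + R).toNat < 2 * R + 1 := by omega
    have h1 := wordAt_congr heq hidx
    apply hc
    have hcoord : -(R:ℤ) + ((c + R).toNat : ℤ) = c := by omega
    rwa [hcoord] at h1
  have hcard : t.card ≤ (langOf_finite Y (2 * R + 1)).toFinset.card := by
    apply Finset.card_le_card_of_injOn
    · intro y hy
      rw [Finset.mem_coe, Set.Finite.mem_toFinset]
      exact wordAt_mem_langOf (htY hy) (-(R:ℤ)) (2 * R + 1)
    · intro y hy z hz heq
      exact hinj (by simpa using hy) (by simpa using hz) heq
  have hcomp : complexity Y (2 * R + 1) = (langOf_finite Y (2 * R + 1)).toFinset.card := by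
    rw [complexity, Set.ncard_eq_toFinset_card _ (langOf_finite Y (2 * R + 1))]
  have hub := hbound (2 * R + 1) (by omega)
  omega

end Minimal

section Exit

variable [Fintype A] [TopologicalSpace A] [DiscreteTopology A]

/-- singleton window -/
lemma wordAt_one (x : ℤ → A) (i : ℤ) : wordAt x i 1 = [x i] := by
  simp [wordAt]

/-- if no exit words of length n exist for M, then the whole language of X at length n
    is contained in the language of M -/
lemma lang_sub_of_no_exit {x : ℤ → A} {X M : Set (ℤ → A)} (hX : X = orbitClosure x)
    (hrec : RecurrentPt x) (hMX : M ⊆ X) (hMne : M.Nonempty) {n : ℕ}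
    (hnoexit : ∀ (w : List A) (b : A), w.length = n → WordIn M w →
      WordIn X (w ++ [b]) → WordIn M (w ++ [b])) :
    ∀ w : List A, w.length = n → WordIn X w → WordIn M w := by
  have hxX : x ∈ X := hX ▸ mem_orbitClosure_self x
  -- a word of M occurs in x
  obtain ⟨w0, hw0len, hw0in⟩ := langOf_nonempty hMne n
  have hw0X : WordIn X w0 := wordIn_mono hMX hw0in
  rw [hX, wordIn_orbitClosure_iff] at hw0X
  obtain ⟨p, hp⟩ := hw0X
  -- propagation to the right of p
  have hprop : ∀ d : ℕ, WordIn M (wordAt x (p + d) n) := by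
    intro d
    induction d with
    | zero =>
        have := hp.wordAt_eq
        rw [hw0len] at this
        simpa using this ▸ hw0in
    | succ d ih =>
        have hsplit : wordAt x (p + d) (n + 1) = wordAt x (p + d) n ++ [x (p + d + n)] := by
          rw [wordAt_append (x := x) (i := (p + d : ℤ)) n 1, wordAt_one]
        have hXin : WordIn X (wordAt x (p + d) (n + 1)) := wordIn_wordAt hxX _ _
        rw [hsplit] at hXin
        have hMin : WordIn M (wordAt x (p + d) n ++ [x (p + d + n)]) :=
          hnoexit _ _ (length_wordAt _ _ _) ih hXin
        rw [← hsplit] at hMin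
        have : WordIn M (wordAt x (p + d + 1) n) :=
          wordIn_of_wordAt_sub hMin (by omega) (by push_cast; omega)
        rw [show (p + ((d:ℕ) + 1 : ℕ) : ℤ) = p + (d:ℕ) + 1 from by push_cast; ring]
        exact this
  -- now any word of X of length n occurs in x at a position ≥ p
  intro w hwlen hwX
  rw [hX, wordIn_orbitClosure_iff] at hwX
  obtain ⟨q, hq⟩ := hwX
  obtain ⟨q', hq'ge, hq'eq⟩ := recurrent_occurs hrec q p n
  have hweq : wordAt x q n = w := by rw [← hq.wordAt_eq, hwlen]
  obtain ⟨d, hd⟩ : ∃ d : ℕ, q' = p + d := ⟨(q' - p).toNat, by omega⟩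
  have := hprop d
  rw [← hd, hq'eq, hweq] at this
  exact this

/-- for a proper subsystem M of the orbit closure of a recurrent point, exit words
    exist at every sufficiently large length -/
lemma exit_exists {x : ℤ → A} {X M : Set (ℤ → A)} (hX : X = orbitClosure x)
    (hrec : RecurrentPt x) (hMX : M ⊆ X) (hMne : M.Nonempty) (hMc : IsClosed M)
    (hMi : ShiftInvariant M) (hneq : M ≠ X) :
    ∃ N : ℕ, ∀ n : ℕ, N ≤ n → ∃ (w : List A) (a b : A), w.length = n ∧
      WordIn M (w ++ [a]) ∧ a ≠ b ∧ WordIn X (w ++ [b]) ∧ ¬ WordIn M (w ++ [b]) := by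
  by_contra hcon
  push_neg at hcon
  -- then languages agree along a cofinal set of lengths, so X ⊆ M
  have hXM : X ⊆ M := by
    apply subset_of_lang_subset hMc hMi
    intro N
    obtain ⟨n, hNn, hno⟩ := hcon N
    refine ⟨n, hNn, ?_⟩
    intro w hwlen hwX
    apply lang_sub_of_no_exit hX hrec hMX hMne ?_ w hwlen hwX
    intro w' b hw'len hw'M hw'X
    by_contra hnotM
    obtain ⟨a, ha⟩ := wordIn_extend hw'M
    have hab : a ≠ b := by rintro rfl; exact hnotM ha
    exact hnotM (hno w' a b hw'len ha hab hw'X)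
  exact hneq (le_antisymm hMX hXM)

end Exit

section Transient

variable [Fintype A] [TopologicalSpace A] [DiscreteTopology A]

/-- if x visits two systems with disjoint languages, then some window of x lies
    outside all the languages of the family -/
lemma transient_exists {x : ℤ → A} {X : Set (ℤ → A)} (hX : X = orbitClosure x)
    (hrec : RecurrentPt x) (𝓕 : Finset (Set (ℤ → A)))
    (hmem : ∀ M ∈ 𝓕, M ⊆ X ∧ M.Nonempty)
    {M1 M2 : Set (ℤ → A)} (hM1 : M1 ∈ 𝓕) (hM2 : M2 ∈ 𝓕) (hne : M1 ≠ M2)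
    {n : ℕ} (hn : 1 ≤ n)
    (hdisj : ∀ M ∈ 𝓕, ∀ M' ∈ 𝓕, M ≠ M' → ∀ w : List A,
      (w.length = n ∨ w.length = n - 1) → WordIn M w → ¬ WordIn M' w) :
    ∃ q : ℤ, ∀ M ∈ 𝓕, ¬ WordIn M (wordAt x q n) := by
  classical
  by_contra hcon
  push_neg at hcon
  -- occurrence of an M1-word
  obtain ⟨w1, hw1len, hw1in⟩ := langOf_nonempty (hmem M1 hM1).2 n
  have hw1X : WordIn X w1 := wordIn_mono (hmem M1 hM1).1 hw1in
  rw [hX, wordIn_orbitClosure_iff] at hw1X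
  obtain ⟨q1, hq1⟩ := hw1X
  have hq1w : WordIn M1 (wordAt x q1 n) := by
    rw [show wordAt x q1 n = w1 from by rw [← hq1.wordAt_eq, hw1len]]
    exact hw1in
  -- occurrence of an M2-word at q2 ≥ q1
  obtain ⟨w2, hw2len, hw2in⟩ := langOf_nonempty (hmem M2 hM2).2 n
  have hw2X : WordIn X w2 := wordIn_mono (hmem M2 hM2).1 hw2in
  rw [hX, wordIn_orbitClosure_iff] at hw2X
  obtain ⟨q, hq⟩ := hw2X
  obtain ⟨q2, hq2ge, hq2eq⟩ := recurrent_occurs hrec q q1 n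
  have hq2w : WordIn M2 (wordAt x q2 n) := by
    rw [hq2eq, show wordAt x q n = w2 from by rw [← hq.wordAt_eq, hw2len]]
    exact hw2in
  -- first failure of membership in M1 along [q1, q2]
  set P : ℕ → Prop := fun d => WordIn M1 (wordAt x (q1 + d) n) with hP
  have hex : ∃ d : ℕ, ¬ P d := by
    refine ⟨(q2 - q1).toNat, ?_⟩
    show ¬ WordIn M1 (wordAt x (q1 + ((q2 - q1).toNat : ℤ)) n)
    rw [show (q1 + ((q2 - q1).toNat : ℤ)) = q2 from by omega]
    exact hdisj M2 hM2 M1 hM1 (Ne.symm hne) _ (Or.inl (length_wordAt _ _ _)) hq2w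
  set d0 : ℕ := Nat.find hex with hd0
  have hd0spec : ¬ P d0 := Nat.find_spec hex
  have hd0pos : 1 ≤ d0 := by
    rcases Nat.eq_zero_or_pos d0 with h | h
    · exfalso; apply hd0spec; rw [h]; show WordIn M1 (wordAt x (q1 + ((0:ℕ):ℤ)) n)
      simpa using hq1w
    · exact h
  have hprev : P (d0 - 1) := by
    by_contra hnp
    have := Nat.find_min hex (m := d0 - 1) (by omega)
    exact this hnp
  -- the window at q1 + d0 is in some M' ≠ M1
  obtain ⟨M', hM', hM'w⟩ := hcon (q1 + d0)
  have hM'ne : M1 ≠ M' := by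
    rintro rfl
    exact hd0spec hM'w
  -- overlap word of length n - 1 is in both languages
  have hov1 : WordIn M1 (wordAt x (q1 + d0) (n - 1)) := by
    have hthis : WordIn M1 (wordAt x (q1 + ((d0 - 1 : ℕ) : ℤ)) n) := hprev
    apply wordIn_of_wordAt_sub hthis (by omega) (by omega)
  have hov2 : WordIn M' (wordAt x (q1 + d0) (n - 1)) :=
    wordIn_of_wordAt_sub hM'w le_rfl (by omega)
  exact hdisj M1 hM1 M' hM' hM'ne _ (Or.inr (length_wordAt _ _ _)) hov1 hov2

end Transient

theorem stmt5 [Fintype A] [TopologicalSpace A] [DiscreteTopology A]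
    (x : ℤ → A) (X : Set (ℤ → A)) (hX : X = orbitClosure x) (hrec : RecurrentPt x)
    (j i : ℕ) (hj : 2 ≤ j) (hij : i ≤ j)
    (hcard : {M : Set (ℤ → A) | MinimalSubsystem X M}.ncard = j)
    (hproper : ∀ M : Set (ℤ → A), MinimalSubsystem X M → M ≠ X)
    (hinf : {M : Set (ℤ → A) | MinimalSubsystem X M ∧ M.Infinite}.ncard = i) :
    Tendsto (fun m : ℕ => (complexity X m : ℤ) - ((j : ℤ) + i) * m) atTop atTop := by
  classical
  have hxX : x ∈ X := hX ▸ mem_orbitClosure_self x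
  -- Stage 1 : the finite family of minimal subsystems
  have hfinM : {M : Set (ℤ → A) | MinimalSubsystem X M}.Finite := by
    by_contra h
    rw [Set.Infinite.ncard h] at hcard
    omega
  set 𝓕 : Finset (Set (ℤ → A)) := hfinM.toFinset with h𝓕
  have hmem𝓕 : ∀ M, M ∈ 𝓕 ↔ MinimalSubsystem X M := by
    intro M; rw [h𝓕, Set.Finite.mem_toFinset]; rfl
  have hcardF : 𝓕.card = j := by
    rw [h𝓕, ← Set.ncard_eq_toFinset_card _ hfinM, hcard]
  have hfinI : {M : Set (ℤ → A) | MinimalSubsystem X M ∧ M.Infinite}.Finite :=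
    hfinM.subset (fun M hM => hM.1)
  have hcardI : (𝓕.filter (fun M => M.Infinite)).card = i := by
    rw [← hinf, Set.ncard_eq_toFinset_card _ hfinI]
    congr 1
    ext M
    simp only [Set.Finite.mem_toFinset, Finset.mem_filter, hmem𝓕]
    rfl
  -- Stage 2 : thresholds
  have hthr : ∀ M : Set (ℤ → A), ∃ N : ℕ, MinimalSubsystem X M →
      ∀ n : ℕ, N ≤ n → ∃ (w : List A) (a b : A), w.length = n ∧
        WordIn M (w ++ [a]) ∧ a ≠ b ∧ WordIn X (w ++ [b]) ∧ ¬ WordIn M (w ++ [b]) := by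
    intro M
    by_cases h : MinimalSubsystem X M
    · obtain ⟨N, hN⟩ := exit_exists hX hrec h.1 h.2.1 h.2.2.1 h.2.2.2.1 (hproper M h)
      exact ⟨N, fun _ => hN⟩
    · exact ⟨0, fun hm => absurd hm h⟩
  choose NE hNE using hthr
  have hdthr : ∀ M M' : Set (ℤ → A), ∃ D : ℕ,
      MinimalSubsystem X M → MinimalSubsystem X M' → M ≠ M' →
      ∀ n : ℕ, D ≤ n → ∀ w : List A, w.length = n → WordIn M w → ¬ WordIn M' w := by
    intro M M'
    by_cases h : MinimalSubsystem X M ∧ MinimalSubsystem X M' ∧ M ≠ M'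
    · obtain ⟨h1, h2, h3⟩ := h
      obtain ⟨D, hD⟩ := lang_disjoint h1.2.2.1 h1.2.2.2.1 h2.2.2.1 h2.2.2.2.1
        (minimal_disjoint h1 h2 h3)
      exact ⟨D, fun _ _ _ => hD⟩
    · exact ⟨0, fun ha hb hc => absurd ⟨ha, hb, hc⟩ h⟩
  choose DD hDD using hdthr
  set N0 : ℕ := (𝓕.sup NE ⊔ (𝓕 ×ˢ 𝓕).sup (fun p => DD p.1 p.2)) + 1 with hN0
  have hNE_le : ∀ M ∈ 𝓕, NE M ≤ N0 - 1 := by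
    intro M hM
    have := Finset.le_sup (f := NE) hM
    omega
  have hdisj_at : ∀ M ∈ 𝓕, ∀ M' ∈ 𝓕, M ≠ M' → ∀ w : List A,
      N0 - 1 ≤ w.length → WordIn M w → ¬ WordIn M' w := by
    intro M hM M' hM' hne w hlen
    have hsup : DD M M' ≤ (𝓕 ×ˢ 𝓕).sup (fun p => DD p.1 p.2) :=
      Finset.le_sup (f := fun p => DD p.1 p.2) (Finset.mk_mem_product hM hM')
    exact hDD M M' ((hmem𝓕 M).1 hM) ((hmem𝓕 M').1 hM') hne w.length (by omega) w rfl
  -- Stage 3 : contribution sets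
  have hT : ∀ (M : Set (ℤ → A)) (n : ℕ), ∃ T : Finset (List A),
      MinimalSubsystem X M → NE M ≤ n →
      (∀ w ∈ T, w.length = n ∧ WordIn M w ∧ WordIn X w) ∧
      1 + (if M.Infinite then 1 else 0) ≤ ∑ w ∈ T, (extCount X w - 1) := by
    intro M n
    by_cases h : MinimalSubsystem X M ∧ NE M ≤ n
    · obtain ⟨hmin, hn⟩ := h
      obtain ⟨w, a, b, hwlen, hwa, hab, hwbX, hwbM⟩ := hNE M hmin n hn
      have hwM : WordIn M w := wordIn_of_append_left hwa
      have hwX : WordIn X w := wordIn_mono hmin.1 hwM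
      have hwRS : RightSpecial X w := ⟨a, b, hab, wordIn_mono hmin.1 hwa, hwbX⟩
      by_cases hinfM : M.Infinite
      · obtain ⟨u, hulen, huM, huRS⟩ := infinite_rightSpecial hinfM n
        have huX : WordIn X u := wordIn_mono hmin.1 huM
        obtain ⟨a', b', hab', ha', hb'⟩ := huRS
        have huRSX : RightSpecial X u :=
          ⟨a', b', hab', wordIn_mono hmin.1 ha', wordIn_mono hmin.1 hb'⟩
        by_cases huw : u = w
        · -- one word with at least three extensions
          subst huw
          refine ⟨{u}, fun _ _ => ⟨fun v hv => ?_, ?_⟩⟩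
          · have hv' : v = u := by simpa using hv
            subst hv'
            exact ⟨hulen, huM, huX⟩
          · have h3 : 3 ≤ extCount X u := by
              have hsub : ({a', b', b} : Finset A) ⊆
                  Finset.univ.filter (fun c : A => WordIn X (u ++ [c])) := by
                intro c hc
                simp only [Finset.mem_insert, Finset.mem_singleton] at hc
                rcases hc with rfl | rfl | rfl
                · simp [wordIn_mono hmin.1 ha']
                · simp [wordIn_mono hmin.1 hb']
                · simp [hwbX]
              have hba' : a' ≠ b := by rintro rfl; exact hwbM ha'
              have hbb' : b' ≠ b := by rintro rfl; exact hwbM hb'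
              have hcard3 : ({a', b', b} : Finset A).card = 3 := by
                rw [Finset.card_insert_of_notMem (by simp [hab', hba']),
                  Finset.card_insert_of_notMem (by simp [hbb'])]
                simp
              calc 3 = ({a', b', b} : Finset A).card := hcard3.symm
                _ ≤ _ := Finset.card_le_card hsub
            rw [Finset.sum_singleton]
            simp only [hinfM, if_true]
            omega
        · refine ⟨{u, w}, fun _ _ => ⟨fun v hv => ?_, ?_⟩⟩
          · rcases Finset.mem_insert.1 hv with rfl | hv'
            · exact ⟨hulen, huM, huX⟩
            · have hv'' : v = w := by simpa using hv'
              subst hv''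
              exact ⟨hwlen, hwM, hwX⟩
          · rw [Finset.sum_pair huw]
            have := two_le_extCount huRSX
            have := two_le_extCount hwRS
            simp only [hinfM, if_true]
            omega
      · refine ⟨{w}, fun _ _ => ⟨fun v hv => ?_, ?_⟩⟩
        · have hv' : v = w := by simpa using hv
          subst hv'
          exact ⟨hwlen, hwM, hwX⟩
        · rw [Finset.sum_singleton]
          have := two_le_extCount hwRS
          simp only [hinfM, if_false]
          omega
    · exact ⟨∅, fun h1 h2 => absurd ⟨h1, h2⟩ h⟩
  choose TT hTT using hT
  -- Stage 4 : the increment inequality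
  have hinc : ∀ n : ℕ, N0 ≤ n → ∀ E : Finset (List A),
      (∀ w ∈ E, w.length = n ∧ WordIn X w ∧ RightSpecial X w ∧ ∀ M ∈ 𝓕, ¬ WordIn M w) →
      complexity X n + (j + i) + E.card ≤ complexity X (n + 1) := by
    intro n hn E hE
    have hTTn : ∀ M ∈ 𝓕, (∀ w ∈ TT M n, w.length = n ∧ WordIn M w ∧ WordIn X w) ∧
        1 + (if M.Infinite then 1 else 0) ≤ ∑ w ∈ TT M n, (extCount X w - 1) := by
      intro M hM
      exact hTT M n ((hmem𝓕 M).1 hM) (le_trans (hNE_le M hM) (by omega))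
    -- the union of the contribution sets, pairwise disjoint
    have hpw : (↑𝓕 : Set (Set (ℤ → A))).PairwiseDisjoint (fun M => TT M n) := by
      intro M hM M' hM' hne
      refine Finset.disjoint_left.2 (fun w hw hw' => ?_)
      have h1 := ((hTTn M (by simpa using hM)).1 w hw)
      have h2 := ((hTTn M' (by simpa using hM')).1 w hw')
      exact hdisj_at M (by simpa using hM) M' (by simpa using hM') hne w (by omega) h1.2.1 h2.2.1
    set B : Finset (List A) := 𝓕.biUnion (fun M => TT M n) with hB
    have hEB : Disjoint E B := by
      rw [Finset.disjoint_left]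
      intro w hw hwB
      obtain ⟨M, hM, hwM⟩ := Finset.mem_biUnion.1 hwB
      exact (hE w hw).2.2.2 M hM ((hTTn M hM).1 w hwM).2.1
    set S : Finset (List A) := E ∪ B with hS
    have hSsub : S ⊆ (langOf_finite X n).toFinset := by
      intro w hw
      rw [Set.Finite.mem_toFinset]
      rcases Finset.mem_union.1 hw with hw | hw
      · exact ⟨(hE w hw).1, (hE w hw).2.1⟩
      · obtain ⟨M, hM, hwM⟩ := Finset.mem_biUnion.1 hw
        have := ((hTTn M hM).1 w hwM)
        exact ⟨this.1, this.2.2⟩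
    have hsum : (j + i) + E.card ≤ ∑ w ∈ S, (extCount X w - 1) := by
      rw [hS, Finset.sum_union hEB]
      have hsumB : (j + i) ≤ ∑ w ∈ B, (extCount X w - 1) := by
        rw [hB, Finset.sum_biUnion hpw]
        have hle : ∑ M ∈ 𝓕, (1 + if M.Infinite then 1 else 0)
            ≤ ∑ M ∈ 𝓕, ∑ w ∈ TT M n, (extCount X w - 1) :=
          Finset.sum_le_sum (fun M hM => (hTTn M hM).2)
        have heq : ∑ M ∈ 𝓕, (1 + if M.Infinite then 1 else 0) = j + i := by
          rw [Finset.sum_add_distrib]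
          simp only [Finset.sum_const, smul_eq_mul, mul_one]
          rw [Finset.sum_boole]
          simp only [hcardF, hcardI]
          simp
        omega
      have hsumE : E.card ≤ ∑ w ∈ E, (extCount X w - 1) := by
        have := Finset.card_nsmul_le_sum E (fun w => extCount X w - 1) 1
          (fun w hw => by
            show 1 ≤ extCount X w - 1
            have := two_le_extCount (hE w hw).2.2.1
            omega)
        simpa using this
      omega
    have := complexity_succ_ge X n S hSsub
    omega
  -- Stage 5 : monotone increments
  have hmono : ∀ n : ℕ, N0 ≤ n → complexity X n + (j + i) ≤ complexity X (n + 1) := by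
    intro n hn
    have := hinc n hn ∅ (by simp)
    simpa using this
  -- Stage 6 : strict increments infinitely often
  have hstrict : ∀ N : ℕ, ∃ n : ℕ, N ≤ n ∧
      complexity X n + (j + i) + 1 ≤ complexity X (n + 1) := by
    by_contra hcon
    push_neg at hcon
    obtain ⟨N1, hN1⟩ := hcon
    set N2 : ℕ := max N0 N1 with hN2
    -- every long right-special word belongs to some minimal subsystem
    have hnoTRS : ∀ m : ℕ, N2 ≤ m → ∀ w : List A, w.length = m → WordIn X w →
        RightSpecial X w → ∃ M ∈ 𝓕, WordIn M w := by
      intro m hm w hwl hwX hwRS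
      by_contra hno
      push_neg at hno
      have h1 := hinc m (le_trans (le_max_left _ _) hm) {w}
        (fun v hv => by
          have hv' : v = w := by simpa using hv
          subst hv'
          exact ⟨hwl, hwX, hwRS, hno⟩)
      have h2 := hN1 m (le_trans (le_max_right _ _) hm)
      simp only [Finset.card_singleton] at h1
      omega
    -- two distinct minimal subsystems
    obtain ⟨M1, hM1, M2, hM2, hMne⟩ := Finset.one_lt_card.1 (show 1 < 𝓕.card by omega)
    -- a transient window of x
    set n0 : ℕ := N2 + 1 with hn0
    have hdisjT : ∀ M ∈ 𝓕, ∀ M' ∈ 𝓕, M ≠ M' → ∀ w : List A,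
        (w.length = n0 ∨ w.length = n0 - 1) → WordIn M w → ¬ WordIn M' w := by
      intro M hM M' hM' hne w hlen
      apply hdisj_at M hM M' hM' hne w
      omega
    have hmemsub : ∀ M ∈ 𝓕, M ⊆ X ∧ M.Nonempty :=
      fun M hM => ⟨((hmem𝓕 M).1 hM).1, ((hmem𝓕 M).1 hM).2.1⟩
    obtain ⟨q0, hq0⟩ := transient_exists hX hrec 𝓕 hmemsub hM1 hM2 hMne
      (n := n0) (by omega) hdisjT
    -- a second occurrence of the transient window
    obtain ⟨q2, hq2ge, hq2eq⟩ := recurrent_occurs hrec q0 (q0 + 1) n0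
    -- the continuations agree
    have hchain : ∀ k : ℕ, wordAt x q0 (n0 + k) = wordAt x q2 (n0 + k) := by
      intro k
      induction k with
      | zero => simpa using hq2eq.symm
      | succ k ih =>
          have hwX : WordIn X (wordAt x q0 (n0 + k)) := wordIn_wordAt hxX _ _
          have hnRS : ¬ RightSpecial X (wordAt x q0 (n0 + k)) := by
            intro hRS
            obtain ⟨M, hM, hMw⟩ := hnoTRS (n0 + k) (by omega) _ (length_wordAt _ _ _) hwX hRS
            apply hq0 M hM
            exact wordIn_of_wordAt_sub hMw le_rfl (by push_cast; omega)
          have hsplit1 : wordAt x q0 (n0 + k + 1)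
              = wordAt x q0 (n0 + k) ++ [x (q0 + ((n0 + k : ℕ) : ℤ))] := by
            rw [wordAt_append x q0 (n0 + k) 1, wordAt_one]
          have hsplit2 : wordAt x q2 (n0 + k + 1)
              = wordAt x q2 (n0 + k) ++ [x (q2 + ((n0 + k : ℕ) : ℤ))] := by
            rw [wordAt_append x q2 (n0 + k) 1, wordAt_one]
          have hX1 : WordIn X (wordAt x q0 (n0 + k) ++ [x (q0 + ((n0 + k : ℕ) : ℤ))]) := by
            rw [← hsplit1]; exact wordIn_wordAt hxX _ _
          have hX2 : WordIn X (wordAt x q0 (n0 + k) ++ [x (q2 + ((n0 + k : ℕ) : ℤ))]) := by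
            rw [ih, ← hsplit2]; exact wordIn_wordAt hxX _ _
          have hletter : x (q0 + ((n0 + k : ℕ) : ℤ)) = x (q2 + ((n0 + k : ℕ) : ℤ)) := by
            by_contra hne'
            exact hnRS ⟨_, _, hne', hX1, hX2⟩
          rw [show n0 + (k + 1) = (n0 + k) + 1 from rfl, hsplit1, hsplit2, ih, hletter]
    -- pointwise agreement of the two tails
    have hpt : ∀ d : ℕ, x (q0 + d) = x (q2 + d) := by
      intro d
      exact wordAt_congr' (hchain (d + 1)) (show d < n0 + (d + 1) by omega)
    -- eventual periodicity
    set P : ℕ := (q2 - q0).toNat with hPdef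
    have hPpos : 1 ≤ P := by omega
    have hq2P : q2 = q0 + (P : ℤ) := by omega
    have hmod : ∀ d : ℕ, x (q0 + d) = x (q0 + ((d % P : ℕ) : ℤ)) := by
      intro d
      induction d using Nat.strong_induction_on with
      | _ d ih =>
          by_cases hd : d < P
          · rw [Nat.mod_eq_of_lt hd]
          · push_neg at hd
            have h1 : x (q0 + (d : ℤ)) = x (q2 + ((d - P : ℕ) : ℤ)) := by
              rw [hq2P]
              congr 1
              push_cast
              omega
            rw [h1, ← hpt (d - P), ih (d - P) (by omega), Nat.mod_eq_sub_mod hd]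
    -- so the complexity is bounded
    have hbdd : ∀ n : ℕ, complexity X n ≤ P := by
      intro n
      have hsub : langOf X n ⊆
          (((Finset.range P).image (fun r : ℕ => wordAt x (q0 + r) n) : Finset (List A)) :
            Set (List A)) := by
        rintro w ⟨hwlen, hwX⟩
        rw [hX, wordIn_orbitClosure_iff] at hwX
        obtain ⟨q, hq⟩ := hwX
        obtain ⟨q', hq'ge, hq'eq⟩ := recurrent_occurs hrec q q0 n
        obtain ⟨d, hd⟩ : ∃ d : ℕ, q' = q0 + d := ⟨(q' - q0).toNat, by omega⟩
        have hw : w = wordAt x (q0 + d) n := by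
          rw [← hd, hq'eq, ← hq.wordAt_eq, hwlen]
        simp only [Finset.coe_image, Set.mem_image, Finset.mem_coe, Finset.mem_range]
        refine ⟨d % P, Nat.mod_lt _ (by omega), ?_⟩
        rw [hw]
        simp only [wordAt]
        congr 1
        funext t
        have e1 : (q0 + ((d % P : ℕ) : ℤ)) + t = q0 + ((d % P + t : ℕ) : ℤ) := by
          push_cast; ring
        have e2 : (q0 + (d : ℤ)) + t = q0 + ((d + t : ℕ) : ℤ) := by
          push_cast; ring
        rw [e1, e2, hmod (d + t), hmod (d % P + t), Nat.mod_add_mod]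
      have hle := Set.ncard_le_ncard hsub (Finset.finite_toSet _)
      rw [Set.ncard_coe_finset] at hle
      calc complexity X n ≤ _ := hle
        _ ≤ (Finset.range P).card := Finset.card_image_le
        _ = P := by simp
    -- but the complexity grows linearly: contradiction
    have hgrow : ∀ m : ℕ, complexity X N0 + (j + i) * m ≤ complexity X (N0 + m) := by
      intro m
      induction m with
      | zero => simp
      | succ m ih =>
          have h1 := hmono (N0 + m) (by omega)
          have h2 : N0 + (m + 1) = (N0 + m) + 1 := rfl
          rw [h2, Nat.mul_succ]
          omega
    have h1 := hgrow (P + 1)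
    have h2 := hbdd (N0 + (P + 1))
    have h3 : 2 * (P + 1) ≤ (j + i) * (P + 1) := Nat.mul_le_mul_right _ (by omega)
    omega
  -- Stage 7 : conclusion
  have hfmono : ∀ a : ℕ, N0 ≤ a → ∀ n : ℕ, a ≤ n →
      (complexity X a : ℤ) - ((j : ℤ) + i) * a ≤ (complexity X n : ℤ) - ((j : ℤ) + i) * n := by
    intro a ha n hn
    induction n, hn using Nat.le_induction with
    | base => exact le_rfl
    | succ n hn ih =>
        refine le_trans ih ?_
        have h1 : (complexity X n : ℤ) + ((j : ℤ) + i) ≤ (complexity X (n + 1) : ℤ) := by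
          exact_mod_cast hmono n (by omega)
        have e : ((j : ℤ) + i) * ((n : ℤ) + 1) = ((j : ℤ) + i) * (n : ℤ) + ((j : ℤ) + i) := by
          ring
        push_cast
        linarith
  rw [tendsto_atTop]
  intro b
  rw [eventually_atTop]
  have key : ∀ t : ℕ, ∃ N : ℕ, N0 ≤ N ∧ ∀ n : ℕ, N ≤ n →
      (complexity X N0 : ℤ) - ((j : ℤ) + i) * N0 + t ≤
        (complexity X n : ℤ) - ((j : ℤ) + i) * n := by
    intro t
    induction t with
    | zero => exact ⟨N0, le_rfl, fun n hn => by simpa using hfmono N0 le_rfl n hn⟩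
    | succ t ih =>
        obtain ⟨N, hN0N, hbound⟩ := ih
        obtain ⟨n1, hn1ge, hn1⟩ := hstrict N
        refine ⟨n1 + 1, by omega, fun n hn => ?_⟩
        have h1 := hbound n1 hn1ge
        have h2 : (complexity X n1 : ℤ) - ((j : ℤ) + i) * n1 + 1 ≤
            (complexity X (n1 + 1) : ℤ) - ((j : ℤ) + i) * ((n1 : ℤ) + 1) := by
          have hc : (complexity X n1 : ℤ) + ((j : ℤ) + i) + 1 ≤ (complexity X (n1 + 1) : ℤ) := by
            exact_mod_cast hn1
          have e : ((j : ℤ) + i) * ((n1 : ℤ) + 1) = ((j : ℤ) + i) * (n1 : ℤ) + ((j : ℤ) + i) := by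
            ring
          linarith
        have h3 := hfmono (n1 + 1) (by omega) n hn
        push_cast at h1 h2 h3 ⊢
        linarith
  obtain ⟨N, hN0N, hbound⟩ := key (b - ((complexity X N0 : ℤ) - ((j : ℤ) + i) * N0)).toNat
  refine ⟨N, fun n hn => ?_⟩
  have h1 := hbound n hn
  have h2 : (b - ((complexity X N0 : ℤ) - ((j : ℤ) + i) * N0)) ≤
      (((b - ((complexity X N0 : ℤ) - ((j : ℤ) + i) * N0)).toNat : ℤ)) := Int.self_le_toNat _
  linarith
end

section
/- Let X be a subshift with limsup_{n→∞} c_X(n)/n < 3, and let ε = 3 − limsup_{n→∞} c_X(n)/n. Then there is N such that every interval [i, (6/ε)·i] with i ≥ N contains an integer n with c_X(n+1) − c_X(n) ≤ 2. Consequently there is a logarithmically syndetic sequence (n_k) (i.e., n_{k+1}/n_k bounded) with at most 2 right-special words of each length n_k. -/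
open Filter Topology MeasureTheory

variable {A : Type*} {B : Type*}

lemma occursAt_iff (x : ℤ → A) (w : List A) (i : ℤ) :
    occursAt x w i ↔ ∀ k : ℕ, (h : k < w.length) → x (i + k) = w[k] := by
  constructor
  · intro h k hk; simpa [List.get_eq_getElem] using h ⟨k, hk⟩
  · intro h k; simpa [List.get_eq_getElem] using h k.val k.isLt

lemma wordIn_prefix {X : Set (ℤ → A)} {w : List A} {c : A}
    (h : WordIn X (w ++ [c])) : WordIn X w := by
  obtain ⟨x, hx, i, ho⟩ := h
  refine ⟨x, hx, i, (occursAt_iff _ _ _).2 fun k hk => ?_⟩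
  rw [occursAt_iff] at ho
  have := ho k (by simp; omega)
  rwa [List.getElem_append_left] at this

lemma exists_extension {X : Set (ℤ → A)} {w : List A}
    (h : WordIn X w) : ∃ c, WordIn X (w ++ [c]) := by
  obtain ⟨x, hx, i, ho⟩ := h
  rw [occursAt_iff] at ho
  refine ⟨x (i + w.length), x, hx, i, (occursAt_iff _ _ _).2 fun k hk => ?_⟩
  rw [List.length_append, List.length_singleton] at hk
  rcases Nat.lt_or_ge k w.length with hlt | hge
  · rw [List.getElem_append_left hlt]; exact ho k hlt
  · have hk' : k = w.length := by omega
    subst hk'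
    simp [List.getElem_concat_length]

lemma lang_finite [Fintype A] (X : Set (ℤ → A)) (n : ℕ) : (langOf X n).Finite := by
  apply Set.Finite.subset (Set.finite_range (List.ofFn : (Fin n → A) → List A))
  rintro w ⟨hlen, -⟩
  subst hlen
  exact ⟨fun i => w[(i : ℕ)], List.ofFn_getElem⟩

lemma RS_subset_lang (X : Set (ℤ → A)) (n : ℕ) : RS X n ⊆ langOf X n := by
  rintro w ⟨hlen, a, b, -, h1, -⟩
  exact ⟨hlen, wordIn_prefix h1⟩

lemma complexity_add_RS_le [Fintype A] (X : Set (ℤ → A)) (n : ℕ) :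
    complexity X n + (RS X n).ncard ≤ complexity X (n + 1) := by
  classical
  rcases Set.eq_empty_or_nonempty (langOf X n) with hT | hT
  · have : RS X n = ∅ := Set.subset_empty_iff.1 (hT ▸ RS_subset_lang X n)
    simp [complexity, hT, this]
  obtain ⟨v₀, -, x₀, -, -⟩ := hT
  haveI : Nonempty A := ⟨x₀ 0⟩
  set a : List A → A := fun v =>
    if h : WordIn X v then (exists_extension h).choose else Classical.arbitrary A with ha_def
  have ha : ∀ v, WordIn X v → WordIn X (v ++ [a v]) := by
    intro v h
    simp only [ha_def, dif_pos h]
    exact (exists_extension h).choose_spec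
  set b : List A → A := fun v =>
    if h : RightSpecial X v then
      (if h.choose = a v then h.choose_spec.choose else h.choose)
    else Classical.arbitrary A with hb_def
  have hb : ∀ v, RightSpecial X v → b v ≠ a v ∧ WordIn X (v ++ [b v]) := by
    intro v h
    obtain ⟨hne, h1, h2⟩ := h.choose_spec.choose_spec
    simp only [hb_def, dif_pos h]
    split_ifs with heq
    · exact ⟨fun hc => hne (heq.trans hc.symm), h2⟩
    · exact ⟨heq, h1⟩
  set S₁ : Set (List A) := (fun v => v ++ [a v]) '' (langOf X n) with hS₁
  set S₂ : Set (List A) := (fun v => v ++ [b v]) '' (RS X n) with hS₂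
  have hSub : S₁ ∪ S₂ ⊆ langOf X (n + 1) := by
    rintro w (⟨v, ⟨hlen, hw⟩, rfl⟩ | ⟨v, hv, rfl⟩)
    · exact ⟨by simp [hlen], ha v hw⟩
    · exact ⟨by simp [hv.1], (hb v hv.2).2⟩
  have hinj : ∀ (v₁ v₂ : List A) (c₁ c₂ : A), v₁.length = v₂.length →
      v₁ ++ [c₁] = v₂ ++ [c₂] → v₁ = v₂ ∧ c₁ = c₂ := by
    intro v₁ v₂ c₁ c₂ hl heq
    obtain ⟨h1, h2⟩ := List.append_inj heq hl
    exact ⟨h1, by simpa using h2⟩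
  have hdisj : Disjoint S₁ S₂ := by
    rw [Set.disjoint_left]
    rintro w ⟨v₁, hv₁, rfl⟩ ⟨v₂, hv₂, heq⟩
    obtain ⟨heqv, hc⟩ := hinj v₂ v₁ (b v₂) (a v₁) (hv₂.1.trans hv₁.1.symm) heq
    cases heqv
    exact (hb _ hv₂.2).1 hc
  have hcard₁ : S₁.ncard = (langOf X n).ncard :=
    Set.ncard_image_of_injOn fun v₁ h₁ v₂ h₂ heq =>
      (hinj v₁ v₂ _ _ (h₁.1.trans h₂.1.symm) heq).1
  have hcard₂ : S₂.ncard = (RS X n).ncard :=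
    Set.ncard_image_of_injOn fun v₁ h₁ v₂ h₂ heq =>
      (hinj v₁ v₂ _ _ (h₁.1.trans h₂.1.symm) heq).1
  have hfin : (langOf X (n + 1)).Finite := lang_finite X (n + 1)
  have hfin₁ : S₁.Finite := hfin.subset (fun w hw => hSub (Or.inl hw))
  have hfin₂ : S₂.Finite := hfin.subset (fun w hw => hSub (Or.inr hw))
  calc complexity X n + (RS X n).ncard = S₁.ncard + S₂.ncard := by rw [hcard₁, hcard₂]; rfl
    _ = (S₁ ∪ S₂).ncard := (Set.ncard_union_eq hdisj hfin₁ hfin₂).symm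
    _ ≤ complexity X (n + 1) := Set.ncard_le_ncard hSub hfin

theorem stmt11 [Fintype A] [TopologicalSpace A] [DiscreteTopology A]
    (X : Set (ℤ → A)) (hX : IsSubshift X)
    (hbd : IsBoundedUnder (· ≤ ·) atTop (fun m : ℕ => (complexity X m : ℝ) / m))
    (hlim : limsup (fun m : ℕ => (complexity X m : ℝ) / m) atTop < 3) :
    (∃ N : ℕ, ∀ i : ℕ, N ≤ i → ∃ m : ℕ,
        (i : ℝ) ≤ m ∧
        (m : ℝ) ≤ (6 / (3 - limsup (fun m : ℕ => (complexity X m : ℝ) / m) atTop)) * i ∧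
        complexity X (m + 1) ≤ complexity X m + 2) ∧
    ∃ (nk : ℕ → ℕ) (M : ℝ), StrictMono nk ∧ (∀ k, 0 < nk k) ∧
      (∀ k, (nk (k + 1) : ℝ) / (nk k : ℝ) < M) ∧ ∀ k, (RS X (nk k)).ncard ≤ 2 := by
  classical
  set L : ℝ := limsup (fun m : ℕ => (complexity X m : ℝ) / m) atTop with hL_def
  set K : ℝ := 6 / (3 - L) with hK_def
  have hL0 : 0 ≤ L := by
    apply le_limsup_of_frequently_le _ hbd
    exact Frequently.of_forall fun m => by positivity
  have hε : 0 < 3 - L := by linarith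
  have hK2 : 2 ≤ K := by
    rw [hK_def, le_div_iff₀ hε]; linarith
  have hev : ∀ᶠ m in atTop, (complexity X m : ℝ) / m < 3 - 3 * (3 - L) / 4 := by
    apply eventually_lt_of_limsup_lt _ hbd
    rw [← hL_def]; linarith
  obtain ⟨N₀, hN₀⟩ := eventually_atTop.mp hev
  set N : ℕ := max N₀ 1 with hN_def
  have hN1 : 1 ≤ N := le_max_right _ _
  have part1 : ∀ i : ℕ, N ≤ i → ∃ m : ℕ,
      (i : ℝ) ≤ m ∧ (m : ℝ) ≤ K * i ∧ complexity X (m + 1) ≤ complexity X m + 2 := by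
    intro i hi
    have hi1 : 1 ≤ i := le_trans hN1 hi
    have hiN₀ : N₀ ≤ i := le_trans (le_max_left _ _) hi
    by_contra hcon
    push_neg at hcon
    set Mi : ℕ := ⌊K * i⌋₊ with hMi_def
    have hiR : (0:ℝ) ≤ (i:ℝ) := Nat.cast_nonneg i
    have hiM : i ≤ Mi := by
      rw [hMi_def]
      exact Nat.le_floor (by nlinarith)
    have hMiK : (Mi : ℝ) ≤ K * i := Nat.floor_le (by nlinarith)
    have hgrow : ∀ t : ℕ, i + t ≤ Mi + 1 → 3 * t ≤ complexity X (i + t) := by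
      intro t
      induction t with
      | zero => intro _; simp
      | succ s ih =>
        intro hs
        have hs' : i + s ≤ Mi := by omega
        have h1 : (i : ℝ) ≤ (i + s : ℕ) := by
          push_cast; linarith [Nat.cast_nonneg (α := ℝ) s]
        have h2 : ((i + s : ℕ) : ℝ) ≤ K * i := by
          calc ((i + s : ℕ) : ℝ) ≤ (Mi : ℝ) := by exact_mod_cast hs'
            _ ≤ K * i := hMiK
        have := hcon (i + s) h1 h2
        have ihs := ih (by omega)
        have : i + (s + 1) = (i + s) + 1 := by omega
        rw [this]
        omega
    have hfin := hgrow (Mi + 1 - i) (by omega)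
    have hMi1 : i + (Mi + 1 - i) = Mi + 1 := by omega
    rw [hMi1] at hfin
    have hN₀Mi : N₀ ≤ Mi + 1 := by omega
    have hsmall := hN₀ (Mi + 1) hN₀Mi
    have hpos : (0:ℝ) < ((Mi + 1 : ℕ) : ℝ) := by positivity
    rw [div_lt_iff₀ hpos] at hsmall
    have hcast : ((3 * (Mi + 1 - i) : ℕ) : ℝ) ≤ (complexity X (Mi + 1) : ℝ) := by
      exact_mod_cast hfin
    have hsub : ((Mi + 1 - i : ℕ) : ℝ) = (Mi : ℝ) + 1 - i := by
      push_cast [Nat.cast_sub (by omega : i ≤ Mi + 1)]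
      ring
    rw [Nat.cast_mul] at hcast
    rw [hsub] at hcast
    have hfloor : K * i < (Mi : ℝ) + 1 := Nat.lt_floor_add_one _
    have hKi : (3 - L) * K = 6 := by
      rw [hK_def]; field_simp
    have hi1R : (1:ℝ) ≤ i := by exact_mod_cast hi1
    push_cast at hsmall hcast
    nlinarith [mul_lt_mul_of_pos_left hfloor (by linarith : (0:ℝ) < 3 * (3 - L) / 4)]
  -- part 2
  have pick_spec : ∀ i : ℕ, N ≤ i → ∃ m : ℕ,
      i ≤ m ∧ (m : ℝ) ≤ K * i ∧ complexity X (m + 1) ≤ complexity X m + 2 := by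
    intro i hi
    obtain ⟨m, h1, h2, h3⟩ := part1 i hi
    exact ⟨m, by exact_mod_cast h1, h2, h3⟩
  set pick : ℕ → ℕ := fun i => if h : N ≤ i then (pick_spec i h).choose else 0 with hpick_def
  have hpick : ∀ i : ℕ, N ≤ i → i ≤ pick i ∧ ((pick i : ℕ) : ℝ) ≤ K * i ∧
      complexity X (pick i + 1) ≤ complexity X (pick i) + 2 := by
    intro i hi
    simp only [hpick_def, dif_pos hi]
    exact (pick_spec i hi).choose_spec
  set nk : ℕ → ℕ := fun k => Nat.rec (pick N) (fun _ prev => pick (prev + 1)) k with hnk_def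
  have hnk0 : nk 0 = pick N := rfl
  have hnks : ∀ k, nk (k + 1) = pick (nk k + 1) := fun k => rfl
  have hnkN : ∀ k, N ≤ nk k := by
    intro k
    induction k with
    | zero => rw [hnk0]; exact (hpick N le_rfl).1
    | succ s ih =>
      rw [hnks]
      have := (hpick (nk s + 1) (by omega)).1
      omega
  have hmono : StrictMono nk := by
    apply strictMono_nat_of_lt_succ
    intro k
    rw [hnks]
    have := (hpick (nk k + 1) (by have := hnkN k; omega)).1
    omega
  have hpos : ∀ k, 0 < nk k := fun k => lt_of_lt_of_le hN1 (hnkN k)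
  refine ⟨⟨N, part1⟩, nk, 2 * K + 1, hmono, hpos, ?_, ?_⟩
  · intro k
    have hNk := hnkN k
    have hposk : (0:ℝ) < (nk k : ℝ) := by exact_mod_cast hpos k
    have h1 : ((nk (k+1) : ℕ) : ℝ) ≤ K * (nk k + 1) := by
      rw [hnks]
      have := (hpick (nk k + 1) (by omega)).2.1
      push_cast at this ⊢
      linarith
    rw [div_lt_iff₀ hposk]
    have h2 : (nk k : ℝ) + 1 ≤ 2 * nk k := by
      have : (1:ℝ) ≤ nk k := by exact_mod_cast hpos k
      linarith
    nlinarith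
  · intro k
    have hc : complexity X (nk k + 1) ≤ complexity X (nk k) + 2 := by
      cases k with
      | zero => rw [hnk0]; exact (hpick N le_rfl).2.2
      | succ s =>
        rw [hnks]
        exact (hpick (nk s + 1) (by have := hnkN s; omega)).2.2
    have := complexity_add_RS_le X (nk k)
    omega
end

section
/- Let x ∈ {0,1,...,j}^Z (j ≥ 3) be of the form x = 0^∞ . 1^{n_1} 2^{n_2} ... (j−1)^{n_{j−1}} 1^{n_j} 2^{n_{j+1}} ... cycling through symbols 1,...,j−1 with exponents n_1 < n_2 < ..., and let X be its orbit closure. Then for every n ≥ 1, the constant words 0^n, 1^n, ..., (j−1)^n are all right-special in X, and every right-special word of X of length n is either constant or contains exactly two distinct symbols p, q with q following p cyclically. -/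
open Filter Topology MeasureTheory

variable {A : Type*} {B : Type*}

lemma wordIn_orbitClosure {A : Type*} [TopologicalSpace A] [DiscreteTopology A]
    (x : ℤ → A) (w : List A) :
    WordIn (orbitClosure x) w ↔ ∃ i : ℤ, occursAt x w i := by
  constructor
  · rintro ⟨y, hy, i, hocc⟩
    have hU : IsOpen {z : ℤ → A | ∀ k : Fin w.length, z (i + (k.val : ℤ)) = w.get k} := by
      have he : {z : ℤ → A | ∀ k : Fin w.length, z (i + (k.val : ℤ)) = w.get k}
          = ⋂ k : Fin w.length, (fun z : ℤ → A => z (i + (k.val : ℤ))) ⁻¹' {w.get k} := by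
        ext z; simp [Set.mem_iInter]
      rw [he]
      exact isOpen_iInter_of_finite fun k =>
        (continuous_apply (i + (k.val : ℤ))).isOpen_preimage _ (isOpen_discrete _)
    rcases mem_closure_iff.mp hy _ hU hocc with ⟨z, hz1, q, rfl⟩
    refine ⟨i + q, fun k => ?_⟩
    have := hz1 k
    simp only [shiftBy] at this
    rw [show i + q + (k.val : ℤ) = i + (k.val : ℤ) + q by ring]
    exact this
  · rintro ⟨i, hocc⟩
    exact ⟨x, subset_closure ⟨0, by funext t; simp [shiftBy]⟩, i, hocc⟩

theorem stmt17 (j : ℕ) (hj : 3 ≤ j)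
    (n : ℕ → ℕ) (hn : StrictMono n) (hn0 : ∀ k, 0 < n k)
    (S : ℕ → ℕ) (hS0 : S 0 = 0) (hS : ∀ k, S (k + 1) = S k + n k)
    (x : ℤ → Fin (j + 1))
    (hneg : ∀ i : ℤ, i < 0 → (x i : ℕ) = 0)
    (hpos : ∀ k p : ℕ, S k ≤ p → p < S (k + 1) → (x (p : ℤ) : ℕ) = k % (j - 1) + 1)
    (X : Set (ℤ → Fin (j + 1))) (hX : X = orbitClosure x) :
    (∀ m : ℕ, 1 ≤ m → ∀ a : Fin (j + 1), (a : ℕ) < j →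
      RightSpecial X (List.replicate m a)) ∧
    (∀ w : List (Fin (j + 1)), RightSpecial X w →
      (∃ a : Fin (j + 1), w = List.replicate w.length a) ∨
      (∃ p q : Fin (j + 1), 1 ≤ (p : ℕ) ∧ (p : ℕ) ≤ j - 1 ∧
        (q : ℕ) = (p : ℕ) % (j - 1) + 1 ∧ {a : Fin (j + 1) | a ∈ w} = {p, q})) := by
  subst hX
  have hfin : ∀ (u v : Fin (j+1)), (u:ℕ) = (v:ℕ) → u = v := fun u v h => Fin.val_injective h
  have hxX : x ∈ orbitClosure x := subset_closure ⟨0, by funext t; simp [shiftBy]⟩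
  have hSmono : ∀ k, S k < S (k+1) := fun k => by have := hn0 k; have := hS k; omega
  have hSM : StrictMono S := strictMono_nat_of_lt_succ hSmono
  have hblk : ∀ p : ℕ, ∃ k, S k ≤ p ∧ p < S (k+1) := by
    intro p
    induction p with
    | zero => exact ⟨0, by have := hS 0; have := hn0 0; omega⟩
    | succ p ih =>
      obtain ⟨k, h1, h2⟩ := ih
      by_cases h : p + 1 < S (k+1)
      · exact ⟨k, by omega, h⟩
      · exact ⟨k+1, by omega, by have := hSmono (k+1); omega⟩
  have hx0 : ∀ p : ℤ, ((x p : ℕ) = 0 ↔ p < 0) := by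
    intro p
    constructor
    · intro h
      by_contra hp
      push_neg at hp
      obtain ⟨k, h1, h2⟩ := hblk p.toNat
      have h3 := hpos k p.toNat h1 h2
      rw [Int.toNat_of_nonneg hp] at h3
      omega
    · exact hneg p
  have hmodsucc : ∀ k, (k+1) % (j-1) = (k % (j-1) + 1) % (j-1) := by
    intro k; rw [Nat.add_mod, Nat.mod_eq_of_lt (show 1 < j - 1 by omega)]
  have hcne : ∀ k, k % (j-1) + 1 ≠ (k+1) % (j-1) + 1 := by
    intro k h
    have h2 := hmodsucc k
    have h3 : k % (j-1) < j - 1 := Nat.mod_lt _ (by omega)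
    rcases Nat.lt_or_ge (k % (j-1) + 1) (j-1) with hc | hc
    · rw [Nat.mod_eq_of_lt hc] at h2; omega
    · have he : k % (j-1) + 1 = j - 1 := by omega
      rw [he, Nat.mod_self] at h2; omega
  have hoccrep : ∀ (M : ℕ) (a c : Fin (j+1)) (i : ℤ),
      (∀ t : ℕ, t < M → x (i + (t:ℤ)) = a) → x (i + (M:ℤ)) = c →
      occursAt x (List.replicate M a ++ [c]) i := by
    intro M a c i h1 h2 k
    have hlen : (List.replicate M a ++ [c]).length = M + 1 := by simp
    have hk : k.val < M + 1 := hlen ▸ k.isLt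
    rw [List.get_eq_getElem]
    rcases Nat.lt_or_ge k.val M with h | h
    · have hg : (List.replicate M a ++ [c])[k.val] = a := by
        rw [List.getElem_append_left (by simpa using h)]
        simp
      rw [hg]; exact h1 k.val h
    · have hkM : k.val = M := by omega
      have hg : (List.replicate M a ++ [c])[k.val] = c :=
        List.getElem_concat_length (by simpa using hkM) _
      rw [hg, hkM]; exact h2
  constructor
  · -- Part 1
    intro m hm a ha
    have hrep : ∀ (c : Fin (j+1)) (i : ℤ), (∀ t : ℕ, t < m → x (i + (t:ℤ)) = a) →
        x (i + (m:ℤ)) = c → WordIn (orbitClosure x) (List.replicate m a ++ [c]) :=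
      fun c i h1 h2 => ⟨x, hxX, i, hoccrep m a c i h1 h2⟩
    by_cases hv : (a : ℕ) = 0
    · refine ⟨x (-1), x 0, ?_, ?_, ?_⟩
      · intro h
        have h1 : (x (-1) : ℕ) = 0 := hneg _ (by omega)
        have h2 : (x ((0:ℕ) : ℤ) : ℕ) = 0 % (j-1) + 1 :=
          hpos 0 0 (by omega) (by have := hS 0; have := hn0 0; omega)
        rw [h] at h1
        simp only [Nat.cast_zero] at h2
        omega
      · refine hrep (x (-1)) (-(m:ℤ)-1) (fun t ht => ?_) ?_
        · refine hfin _ _ ?_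
          rw [hneg _ (by omega), hv]
        · congr 1; ring
      · refine hrep (x 0) (-(m:ℤ)) (fun t ht => ?_) ?_
        · refine hfin _ _ ?_
          rw [hneg _ (by omega), hv]
        · congr 1; ring
    · set v := (a : ℕ) with hvdef
      set k := (v - 1) + (j-1) * (m + 1) with hkdef
      have hkmod : k % (j-1) = v - 1 := by
        rw [hkdef, Nat.add_mul_mod_self_left]
        exact Nat.mod_eq_of_lt (by omega)
      have hkval : k % (j-1) + 1 = v := by omega
      have hnk : m + 1 ≤ n k := by
        have h1 : 2 * (m+1) ≤ (j-1) * (m+1) := Nat.mul_le_mul_right _ (by omega)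
        have h2 : k ≤ n k := hn.le_apply
        omega
      have hSk1 : S (k+1) = S k + n k := hS k
      have hval1 : ∀ t : ℕ, t < n k → (x ((S k + t : ℕ) : ℤ) : ℕ) = v := by
        intro t ht
        rw [hpos k (S k + t) (by omega) (by omega)]
        exact hkval
      have hval2 : (x ((S (k+1) : ℕ) : ℤ) : ℕ) = (k+1) % (j-1) + 1 :=
        hpos (k+1) (S (k+1)) le_rfl (by have := hS (k+1); have := hn0 (k+1); omega)
      refine ⟨x ((S k + m : ℕ) : ℤ), x ((S (k+1) : ℕ) : ℤ), ?_, ?_, ?_⟩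
      · intro h
        have e1 := hval1 m (by omega)
        rw [h, hval2] at e1
        exact hcne k (by omega)
      · refine hrep _ ((S k : ℕ) : ℤ) (fun t ht => ?_) ?_
        · refine hfin _ _ ?_
          rw [show ((S k : ℕ):ℤ) + (t:ℤ) = ((S k + t : ℕ):ℤ) by push_cast; ring]
          rw [hval1 t (by omega)]
        · rw [show ((S k : ℕ):ℤ) + (m:ℤ) = ((S k + m : ℕ):ℤ) by push_cast; ring]
      · refine hrep _ ((S (k+1) - m : ℕ) : ℤ) (fun t ht => ?_) ?_
        · refine hfin _ _ ?_
          rw [show ((S (k+1) - m : ℕ):ℤ) + (t:ℤ) = ((S k + (n k - m + t) : ℕ):ℤ) by omega]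
          rw [hval1 (n k - m + t) (by omega)]
        · rw [show ((S (k+1) - m : ℕ):ℤ) + (m:ℤ) = ((S (k+1) : ℕ):ℤ) by omega]
  · -- Part 2
    intro w hw
    obtain ⟨a, b, hab, hwa, hwb⟩ := hw
    rw [wordIn_orbitClosure] at hwa hwb
    obtain ⟨i₁, h1⟩ := hwa
    obtain ⟨i₂, h2⟩ := hwb
    set m := w.length with hm
    set v : ℕ → ℕ := fun t => (w.getD t 0 : ℕ) with hvdef
    have hext : ∀ (c : Fin (j+1)) (i : ℤ), occursAt x (w ++ [c]) i →
        (∀ t : ℕ, t < m → (x (i + (t:ℤ)) : ℕ) = v t) ∧ x (i + (m:ℤ)) = c := by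
      intro c i hocc
      constructor
      · intro t ht
        have hk := hocc ⟨t, by simp; omega⟩
        rw [List.get_eq_getElem] at hk
        simp only at hk
        rw [List.getElem_append_left (by omega)] at hk
        simp only [hvdef]
        rw [List.getD_eq_getElem w 0 (by omega), ← hk]
      · have hk := hocc ⟨m, by simp; omega⟩
        rw [List.get_eq_getElem] at hk
        simp only at hk
        rwa [List.getElem_concat_length (by omega) _] at hk
    obtain ⟨H1, E1⟩ := hext a i₁ h1
    obtain ⟨H2, E2⟩ := hext b i₂ h2
    have hreplicate : ∀ a' : Fin (j+1), (∀ t, t < m → w.getD t 0 = a') →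
        w = List.replicate m a' := by
      intro a' h
      apply List.ext_getElem (by simp [← hm])
      intro t ht1 ht2
      rw [List.getElem_replicate, ← List.getD_eq_getElem w 0 ht1]
      exact h t (by omega)
    by_cases hz : ∃ t, t < m ∧ v t = 0
    · by_cases hnz : ∃ t, t < m ∧ v t ≠ 0
      · -- mixed: contradiction
        exfalso
        obtain ⟨s, hs, hs0⟩ := hz
        obtain ⟨t', ht', ht'0⟩ := hnz
        have hs2 : i₂ + (s:ℤ) < 0 := (hx0 _).mp (by rw [H2 s hs]; exact hs0)
        have ht2 : 0 ≤ i₂ + (t':ℤ) := by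
          by_contra hc
          push_neg at hc
          exact ht'0 (by rw [← H2 t' ht']; exact (hx0 _).mpr hc)
        set t := (-i₂).toNat with htdef
        have hti : (t:ℤ) = -i₂ := by omega
        have htm : t < m := by omega
        have ht1' : 1 ≤ t := by omega
        have hvt : v t ≠ 0 := by
          rw [← H2 t htm]
          intro hc
          have := (hx0 _).mp hc
          omega
        have hvt1 : v (t-1) = 0 := by
          rw [← H2 (t-1) (by omega)]
          exact (hx0 _).mpr (by omega)
        have hA : 0 ≤ i₁ + (t:ℤ) := by
          by_contra hc
          push_neg at hc
          exact hvt (by rw [← H1 t htm]; exact (hx0 _).mpr hc)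
        have hB : i₁ + ((t-1:ℕ):ℤ) < 0 := (hx0 _).mp (by rw [H1 (t-1) (by omega)]; exact hvt1)
        have hii : i₁ = i₂ := by omega
        exact hab (by rw [← E1, hii, E2])
      · -- all zero
        push_neg at hnz
        left
        refine ⟨0, ?_⟩
        apply hreplicate
        intro t ht
        refine hfin _ _ ?_
        rw [Fin.val_zero]
        exact hnz t ht
    · -- all nonzero
      push_neg at hz
      rcases Nat.eq_zero_or_pos m with hm0 | hmpos
      · left
        refine ⟨0, ?_⟩
        apply hreplicate
        intro t ht; omega
      have hi₁ : 0 ≤ i₁ := by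
        by_contra hc
        push_neg at hc
        exact hz 0 hmpos ((by rw [← H1 0 hmpos]; exact (hx0 _).mpr (by omega)))
      have hi₂ : 0 ≤ i₂ := by
        by_contra hc
        push_neg at hc
        exact hz 0 hmpos ((by rw [← H2 0 hmpos]; exact (hx0 _).mpr (by omega)))
      set N₁ := i₁.toNat with hN₁def
      set N₂ := i₂.toNat with hN₂def
      have hN₁ : (N₁:ℤ) = i₁ := Int.toNat_of_nonneg hi₁
      have hN₂ : (N₂:ℤ) = i₂ := Int.toNat_of_nonneg hi₂
      have G1 : ∀ t, t < m → (x ((N₁ + t : ℕ):ℤ) : ℕ) = v t := by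
        intro t ht
        rw [show ((N₁ + t : ℕ):ℤ) = i₁ + (t:ℤ) by omega]
        exact H1 t ht
      have G2 : ∀ t, t < m → (x ((N₂ + t : ℕ):ℤ) : ℕ) = v t := by
        intro t ht
        rw [show ((N₂ + t : ℕ):ℤ) = i₂ + (t:ℤ) by omega]
        exact H2 t ht
      have run : ∀ (N : ℕ), (∀ s, s < m → (x ((N + s : ℕ):ℤ) : ℕ) = v s) →
          ∀ (K t0 : ℕ), S K ≤ N + t0 → N + t0 < S (K+1) →
          ∀ t, t0 ≤ t → t < m → (∀ s, t0 < s → s ≤ t → v s = v (s-1)) →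
          N + t < S (K+1) := by
        intro N hN K t0 hK1 hK2 t
        induction t with
        | zero => intro _ _ _; omega
        | succ t ih =>
          intro h1 h2 h3
          rcases Nat.lt_or_ge t0 (t+1) with h | h
          · have ht' : N + t < S (K+1) :=
              ih (by omega) (by omega) (fun s hs1 hs2 => h3 s hs1 (by omega))
            by_contra hc
            push_neg at hc
            have heq : (N + (t+1) : ℕ) = S (K+1) := by omega
            have hx1 : (x ((N + (t+1) : ℕ):ℤ) : ℕ) = (K+1) % (j-1) + 1 := by
              rw [heq]
              exact hpos (K+1) (S (K+1)) le_rfl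
                (by have := hS (K+1); have := hn0 (K+1); omega)
            have hx2 : (x ((N + t : ℕ):ℤ) : ℕ) = K % (j-1) + 1 :=
              hpos K (N+t) (by omega) ht'
            have hb := h3 (t+1) (by omega) le_rfl
            simp only [Nat.add_sub_cancel] at hb
            rw [← hN (t+1) h2, ← hN t (by omega)] at hb
            exact hcne K (by omega)
          · omega
      have nextb : ∀ (N : ℕ), (∀ s, s < m → (x ((N + s : ℕ):ℤ) : ℕ) = v s) →
          ∀ (K t0 t' : ℕ), S K ≤ N + t0 → N + t0 < S (K+1) → t0 < t' → t' < m →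
          (∀ s, t0 < s → s < t' → v s = v (s-1)) → v t' ≠ v (t'-1) →
          N + t' = S (K+1) := by
        intro N hN K t0 t' hK1 hK2 hc1 hc2 hc3 hc4
        have hrun : N + (t'-1) < S (K+1) :=
          run N hN K t0 hK1 hK2 (t'-1) (by omega) (by omega)
            (fun s hs1 hs2 => hc3 s hs1 (by omega))
        by_contra hc
        have hlt : N + t' < S (K+1) := by omega
        have e1 : (x ((N + t' : ℕ):ℤ) : ℕ) = K % (j-1) + 1 := hpos K _ (by omega) hlt
        have e2 : (x ((N + (t'-1) : ℕ):ℤ) : ℕ) = K % (j-1) + 1 := hpos K _ (by omega) hrun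
        exact hc4 (by rw [← hN t' hc2, ← hN (t'-1) (by omega)]; omega)
      by_cases hD : ∃ t, 1 ≤ t ∧ t < m ∧ v t ≠ v (t-1)
      · have ht1 := Nat.find_spec hD
        set t1 := Nat.find hD with ht1def
        have hflat1 : ∀ s, 1 ≤ s → s < t1 → v s = v (s-1) := by
          intro s hs1 hs2
          by_contra hc
          exact Nat.find_min hD hs2 ⟨hs1, by omega, hc⟩
        have bnd1 : ∀ N : ℕ, (∀ s, s < m → (x ((N + s : ℕ):ℤ) : ℕ) = v s) →
            ∀ K, S K ≤ N → N < S (K+1) → N + t1 = S (K+1) := by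
          intro N hN K u1 u2
          exact nextb N hN K 0 t1 (by omega) (by omega) (by omega) ht1.2.1
            (fun s hs1 hs2 => hflat1 s hs1 hs2) ht1.2.2
        by_cases hD2 : ∃ t, t1 < t ∧ t < m ∧ v t ≠ v (t-1)
        · exfalso
          have ht2 := Nat.find_spec hD2
          set t2 := Nat.find hD2 with ht2def
          have hflat2 : ∀ s, t1 < s → s < t2 → v s = v (s-1) := by
            intro s hs1 hs2
            by_contra hc
            exact Nat.find_min hD2 hs2 ⟨hs1, by omega, hc⟩
          obtain ⟨k₁, hk₁a, hk₁b⟩ := hblk N₁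
          obtain ⟨k₂, hk₂a, hk₂b⟩ := hblk N₂
          have e1 : N₁ + t1 = S (k₁+1) := bnd1 N₁ G1 k₁ hk₁a hk₁b
          have e2 : N₂ + t1 = S (k₂+1) := bnd1 N₂ G2 k₂ hk₂a hk₂b
          have f1 : N₁ + t2 = S (k₁+1+1) :=
            nextb N₁ G1 (k₁+1) t1 t2 (by omega)
              (by have := hS (k₁+1); have := hn0 (k₁+1); omega)
              ht2.1 ht2.2.1 hflat2 ht2.2.2
          have f2 : N₂ + t2 = S (k₂+1+1) :=
            nextb N₂ G2 (k₂+1) t1 t2 (by omega)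
              (by have := hS (k₂+1); have := hn0 (k₂+1); omega)
              ht2.1 ht2.2.1 hflat2 ht2.2.2
          have hkk : k₁ + 1 = k₂ + 1 := by
            apply hn.injective
            have q1 := hS (k₁+1)
            have q2 := hS (k₂+1)
            omega
          have hSS : S (k₁+1) = S (k₂+1) := by rw [hkk]
          have hii : i₁ = i₂ := by omega
          exact hab (by rw [← E1, hii, E2])
        · push_neg at hD2
          obtain ⟨k, hka, hkb⟩ := hblk N₁
          have e1 : N₁ + t1 = S (k+1) := bnd1 N₁ G1 k hka hkb
          have low : ∀ t, t < t1 → v t = k % (j-1) + 1 := by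
            intro t ht
            rw [← G1 t (by omega)]
            exact hpos k _ (by omega) (by omega)
          have high : ∀ t, t1 ≤ t → t < m → v t = (k+1) % (j-1) + 1 := by
            intro t ht htm
            have hlt : N₁ + t < S (k+1+1) :=
              run N₁ G1 (k+1) t1 (by omega)
                (by have := hS (k+1); have := hn0 (k+1); omega)
                t ht htm (fun s hs1 hs2 => hD2 s hs1 (by omega))
            rw [← G1 t htm]
            exact hpos (k+1) _ (by omega) hlt
          right
          refine ⟨w.getD 0 0, w.getD t1 0, ?_, ?_, ?_, ?_⟩
          · have := low 0 ht1.1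
            simp only [hvdef] at this
            omega
          · have := low 0 ht1.1
            have hmod : k % (j-1) < j - 1 := Nat.mod_lt _ (by omega)
            simp only [hvdef] at this
            omega
          · have hq := high t1 le_rfl ht1.2.1
            have hp := low 0 ht1.1
            simp only [hvdef] at hq hp
            rw [hq, hp, hmodsucc k]
          · ext c
            simp only [Set.mem_setOf_eq, Set.mem_insert_iff, Set.mem_singleton_iff]
            constructor
            · intro hc
              obtain ⟨t, htl, hget⟩ := List.mem_iff_getElem.mp hc
              have hgd : w.getD t 0 = c := by
                rw [List.getD_eq_getElem w 0 htl, hget]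
              rcases Nat.lt_or_ge t t1 with h | h
              · left
                refine hfin _ _ ?_
                have e := low t h
                have e0 := low 0 ht1.1
                simp only [hvdef] at e e0
                rw [hgd] at e
                omega
              · right
                refine hfin _ _ ?_
                have e := high t h (by omega)
                have e0 := high t1 le_rfl ht1.2.1
                simp only [hvdef] at e e0
                rw [hgd] at e
                omega
            · intro hc
              rcases hc with rfl | rfl
              · rw [List.getD_eq_getElem w 0 (by omega)]
                exact List.getElem_mem _
              · rw [List.getD_eq_getElem w 0 (by omega)]
                exact List.getElem_mem _
      · push_neg at hD
        left
        have hconst : ∀ t, t < m → v t = v 0 := by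
          intro t
          induction t with
          | zero => intro _; rfl
          | succ t ih =>
            intro ht
            have := hD (t+1) (by omega) ht
            simp only [Nat.add_sub_cancel] at this
            rw [this]
            exact ih (by omega)
        refine ⟨w.getD 0 0, ?_⟩
        apply hreplicate
        intro t ht
        refine hfin _ _ ?_
        have := hconst t ht
        simp only [hvdef] at this
        exact this
end
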